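/- arXiv:2306.15145 — 6 statements merged into one kernel-verified Lean document; each statement's English description precedes it below -/
import Mathlib

section
/- In a core input-output network, the super-simple nodes appear in the same order on every ιo-simple path; that is, if ρ₁ and ρ₂ are super-simple nodes and ρ₁ appears before ρ₂ on some ιo-simple path, then ρ₁ appears before ρ₂ on every ιo-simple path. -/
/-- A simple (directed) path from `a` to `b`: nonempty node list, consecutive arrows,
no repeated nodes. -/
def IsSPath {V : Type*} (E : V → V → Prop) (a b : V) (p : List V) : Prop :=
  p.Chain' E ∧ p.Nodup ∧ p.head? = some a ∧ p.getLast? = some b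

/-- An `ιo`-simple path. -/
def IoSPath {V : Type*} (E : V → V → Prop) (ι o : V) (p : List V) : Prop :=
  IsSPath E ι o p

/-- A node is simple if it lies on some `ιo`-simple path. -/
def SimpleNode {V : Type*} (E : V → V → Prop) (ι o v : V) : Prop :=
  ∃ p, IoSPath E ι o p ∧ v ∈ p

/-- A node is appendage if it is not simple. -/
def Appendage {V : Type*} (E : V → V → Prop) (ι o v : V) : Prop :=
  ¬ SimpleNode E ι o v

/-- A node is super-simple if it lies on every `ιo`-simple path. -/
def SuperSimple {V : Type*} (E : V → V → Prop) (ι o v : V) : Prop :=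
  ∀ p, IoSPath E ι o p → v ∈ p

/-- A core network: every node is reachable from `ι` and reaches `o`. -/
def Core {V : Type*} (E : V → V → Prop) (ι o : V) : Prop :=
  ∀ v, Relation.ReflTransGen E ι v ∧ Relation.ReflTransGen E v o

/-- `a` occurs (strictly) before `b` on some `ιo`-simple path. -/
def OccBefore {V : Type*} (E : V → V → Prop) (ι o a b : V) : Prop :=
  ∃ p, IoSPath E ι o p ∧ [a, b].Sublist p

/-- Strict partial order on simple nodes induced by super-simple nodes:
`a ≺ b` iff there is a super-simple node `ρ` with `a` (weakly) before `ρ`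
and `ρ` (weakly) before `b` along `ιo`-simple paths, and `a ≠ b`. -/
def SLt {V : Type*} (E : V → V → Prop) (ι o a b : V) : Prop :=
  a ≠ b ∧ ∃ ρ, SuperSimple E ι o ρ ∧ (a = ρ ∨ OccBefore E ι o a ρ) ∧
    (b = ρ ∨ OccBefore E ι o ρ b)

/-- Adjacent (consecutive) super-simple nodes. -/
def AdjSS {V : Type*} (E : V → V → Prop) (ι o ρ ρ' : V) : Prop :=
  SuperSimple E ι o ρ ∧ SuperSimple E ι o ρ' ∧ SLt E ι o ρ ρ' ∧
  ¬ ∃ ρ'', SuperSimple E ι o ρ'' ∧ SLt E ι o ρ ρ'' ∧ SLt E ι o ρ'' ρ'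

/-- The simple subnetwork between adjacent super-simple nodes `ρ ≺ ρ'`. -/
def SimpleSubnet {V : Type*} (E : V → V → Prop) (ι o ρ ρ' : V) : Set V :=
  {σ | SimpleNode E ι o σ ∧ SLt E ι o ρ σ ∧ SLt E ι o σ ρ'}

/-- Two simple nodes lie in the same simple subnetwork. -/
def SameSimpleSubnet {V : Type*} (E : V → V → Prop) (ι o a b : V) : Prop :=
  ∃ ρ ρ', AdjSS E ι o ρ ρ' ∧ a ∈ SimpleSubnet E ι o ρ ρ' ∧
    b ∈ SimpleSubnet E ι o ρ ρ'

/-- `a ⪯ b`: either `a ≺ b`, or `a = b` is super-simple, or `a`, `b` lie in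
the same simple subnetwork. -/
def SLe {V : Type*} (E : V → V → Prop) (ι o a b : V) : Prop :=
  SLt E ι o a b ∨ (a = b ∧ SuperSimple E ι o a) ∨ SameSimpleSubnet E ι o a b

/-- An appendage path from `a` to `b`: a simple path containing an appendage
node, all of whose nodes other than the endpoints are appendage. -/
def AppPath {V : Type*} (E : V → V → Prop) (ι o a b : V) (p : List V) : Prop :=
  IsSPath E a b p ∧ (∃ x ∈ p, Appendage E ι o x) ∧
  ∀ x ∈ p, x ≠ a → x ≠ b → Appendage E ι o x

/-- Reachability inside a set of nodes. -/
def ReachIn {V : Type*} (E : V → V → Prop) (s : Set V) (a b : V) : Prop :=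
  Relation.ReflTransGen (fun x y => E x y ∧ x ∈ s ∧ y ∈ s) a b

/-- `a` and `b` belong to the same transitive (strongly connected) component
of the subnetwork induced on `s`. -/
def SameTCIn {V : Type*} (E : V → V → Prop) (s : Set V) (a b : V) : Prop :=
  a ∈ s ∧ b ∈ s ∧ ReachIn E s a b ∧ ReachIn E s b a

/-- A super-appendage node: an appendage node whose transitive component in
every complementary subnetwork `C_S` consists only of appendage nodes. -/
def SuperAppendage {V : Type*} (E : V → V → Prop) (ι o τ : V) : Prop :=
  Appendage E ι o τ ∧ ∀ p, IoSPath E ι o p → τ ∉ p →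
    ∀ x, SameTCIn E {v | v ∉ p} τ x → Appendage E ι o x

/-- An appendage subnetwork: a transitive component of the subnetwork of
super-appendage nodes. -/
def IsAppSubnet {V : Type*} (E : V → V → Prop) (ι o : V) (A : Set V) : Prop :=
  ∃ τ, SuperAppendage E ι o τ ∧
    A = {x | SameTCIn E {v | SuperAppendage E ι o v} τ x}

/-- There is an appendage path from `σ` to `κ`. -/
def HasAppPathTo {V : Type*} (E : V → V → Prop) (ι o σ κ : V) : Prop :=
  ∃ p, AppPath E ι o σ κ p

/-- `σ = σᵘ(κ)`: if `κ` is simple then `σ = κ`; otherwise `σ` is a minimal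
upstream simple node with an appendage path to `κ`. -/
def IsSigmaU {V : Type*} (E : V → V → Prop) (ι o κ σ : V) : Prop :=
  (SimpleNode E ι o κ ∧ σ = κ) ∨
  (Appendage E ι o κ ∧ SimpleNode E ι o σ ∧ HasAppPathTo E ι o σ κ ∧
    ∀ σ', SimpleNode E ι o σ' → HasAppPathTo E ι o σ' κ → ¬ SLt E ι o σ' σ)

/-- There is an appendage path from some node of `A` to `σ`. -/
def HasAppPathFromSet {V : Type*} (E : V → V → Prop) (ι o : V) (A : Set V)
    (σ : V) : Prop :=
  ∃ τ ∈ A, ∃ p, AppPath E ι o τ σ p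

/-- `σ = σᵈ(A)`: a maximal downstream simple node with an appendage path
from `A`. -/
def IsSigmaD {V : Type*} (E : V → V → Prop) (ι o : V) (A : Set V) (σ : V) : Prop :=
  SimpleNode E ι o σ ∧ HasAppPathFromSet E ι o A σ ∧
    ∀ σ', SimpleNode E ι o σ' → HasAppPathFromSet E ι o A σ' → ¬ SLt E ι o σ σ'

/-- A simple (directed) cycle, given by its list of distinct nodes with a
closing arrow from the last node back to the first. -/
def IsSimpleCycle {V : Type*} (E : V → V → Prop) (c : List V) : Prop :=
  c.Chain' E ∧ c.Nodup ∧ ∃ a b, c.head? = some a ∧ c.getLast? = some b ∧ E b a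

/-- `τ` is a linked appendage node of the simple subnetwork determined by the
adjacent super-simple pair `ρ ≺ ρ'`. -/
def Linked {V : Type*} (E : V → V → Prop) (ι o ρ ρ' τ : V) : Prop :=
  Appendage E ι o τ ∧ ¬ SuperAppendage E ι o τ ∧
  ∃ p, IoSPath E ι o p ∧ τ ∉ p ∧ ∀ x, SameTCIn E {v | v ∉ p} τ x →
    x = τ ∨ x ∈ SimpleSubnet E ι o ρ ρ' ∨
      (Appendage E ι o x ∧ ¬ SuperAppendage E ι o x)

/-- The structural subnetwork determined by adjacent super-simple nodes
`ρ ≺ ρ'`: the two super-simple nodes, the simple subnetwork between them,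
and its linked appendage nodes. -/
def StructuralSet {V : Type*} (E : V → V → Prop) (ι o ρ ρ' : V) : Set V :=
  {ρ, ρ'} ∪ SimpleSubnet E ι o ρ ρ' ∪ {τ | Linked E ι o ρ ρ' τ}

/-- `L` is a structural subnetwork. -/
def IsStructSubnet {V : Type*} (E : V → V → Prop) (ι o : V) (L : Set V) : Prop :=
  ∃ ρ ρ', AdjSS E ι o ρ ρ' ∧ L = StructuralSet E ι o ρ ρ'

private lemma sublist_pair_decomp {V : Type*} {a b : V} :
    ∀ {l : List V}, [a, b].Sublist l → ∃ u v, l = u ++ a :: v ∧ b ∈ v := by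
  intro l h
  induction l with
  | nil => simp at h
  | cons x l ih =>
    cases h with
    | cons _ h' =>
      obtain ⟨u, v, rfl, hb⟩ := ih h'
      exact ⟨x :: u, v, rfl, hb⟩
    | cons_cons _ h' =>
      exact ⟨[], l, rfl, h'.subset (by simp)⟩

private lemma mem_mem_sublist {V : Type*} {a b : V} (hab : a ≠ b) :
    ∀ {l : List V}, a ∈ l → b ∈ l → [a, b].Sublist l ∨ [b, a].Sublist l := by
  intro l
  induction l with
  | nil => simp
  | cons x l ih =>
    intro ha hb
    by_cases hxa : x = a
    · subst hxa
      have hb' : b ∈ l := by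
        rcases List.mem_cons.1 hb with h | h
        · exact absurd h.symm hab
        · exact h
      exact Or.inl (List.Sublist.cons₂ _ (List.singleton_sublist.2 hb'))
    · by_cases hxb : x = b
      · subst hxb
        have ha' : a ∈ l := by
          rcases List.mem_cons.1 ha with h | h
          · exact absurd h hab
          · exact h
        exact Or.inr (List.Sublist.cons₂ _ (List.singleton_sublist.2 ha'))
      · have ha' : a ∈ l := by
          rcases List.mem_cons.1 ha with h | h
          · exact absurd h.symm hxa
          · exact h
        have hb' : b ∈ l := by
          rcases List.mem_cons.1 hb with h | h
          · exact absurd h.symm hxb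
          · exact h
        rcases ih ha' hb' with h | h
        · exact Or.inl (h.cons x)
        · exact Or.inr (h.cons x)

private lemma chain_extract {V : Type*} (E : V → V → Prop) :
    ∀ n (p : List V), p.length ≤ n → p.Chain' E → p ≠ [] →
    ∃ q : List V, q.Chain' E ∧ q.Nodup ∧ q.head? = p.head? ∧
      q.getLast? = p.getLast? ∧ ∀ x ∈ q, x ∈ p := by
  intro n
  induction n with
  | zero => intro p hl _ hne; simp [List.length_eq_zero_iff.1 (Nat.le_zero.1 hl)] at hne
  | succ n ih =>
    intro p hl hc hne
    by_cases hnd : p.Nodup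
    · exact ⟨p, hc, hnd, rfl, rfl, fun x hx => hx⟩
    · obtain ⟨x, hdup⟩ := List.exists_duplicate_iff_not_nodup.2 hnd
      obtain ⟨s, v, rfl, hxv⟩ := sublist_pair_decomp (List.duplicate_iff_sublist.1 hdup)
      obtain ⟨u, w, rfl⟩ := List.append_of_mem hxv
      -- p = s ++ x :: u ++ x :: w, shorten to s ++ x :: w
      have hc' : (s ++ x :: w).Chain' E := by
        unfold List.Chain' at hc ⊢; rw [List.isChain_append]
        rw [List.isChain_append] at hc
        refine ⟨hc.1, ?_, ?_⟩
        · have : (x :: w).Chain' E := hc.2.1.suffix ⟨x :: u, by simp⟩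
          exact this
        · intro a ha b hb
          exact hc.2.2 a ha b hb
      have hlen : (s ++ x :: w).length ≤ n := by
        have := hl
        simp only [List.length_append, List.length_cons] at this ⊢
        omega
      obtain ⟨q, hq1, hq2, hq3, hq4, hq5⟩ := ih _ hlen hc' (by simp)
      refine ⟨q, hq1, hq2, ?_, ?_, ?_⟩
      · rw [hq3]; cases s <;> simp
      · rw [hq4]
        rw [List.getLast?_append]
        have : (s ++ x :: (u ++ x :: w)) = (s ++ x :: u) ++ (x :: w) := by simp
        rw [this, List.getLast?_append]
        obtain ⟨y, hy⟩ : ∃ y, (x :: w).getLast? = some y :=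
          ⟨(x :: w).getLast (by simp), List.getLast?_eq_getLast _⟩
        rw [hy]; simp
      · intro y hy
        have := hq5 y hy
        simp only [List.mem_append, List.mem_cons] at this ⊢
        tauto

/-- In a core input-output network, super-simple nodes appear in the same
order on every `ιo`-simple path. -/
theorem superSimple_order_independent {V : Type*} (E : V → V → Prop) (ι o : V)
    (hcore : Core E ι o) (ρ₁ ρ₂ : V)
    (h1 : SuperSimple E ι o ρ₁) (h2 : SuperSimple E ι o ρ₂)
    (p : List V) (hp : IoSPath E ι o p) (hb : [ρ₁, ρ₂].Sublist p) :
    ∀ q, IoSPath E ι o q → [ρ₁, ρ₂].Sublist q := by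
  obtain ⟨hpc, hpn, hph, hpl⟩ := hp
  intro q hq
  have hne : ρ₁ ≠ ρ₂ := by
    rintro rfl
    exact (List.duplicate_iff_sublist.2 hb).not_nodup hpn
  rcases mem_mem_sublist hne (h1 q hq) (h2 q hq) with h | h
  · exact h
  · exfalso
    obtain ⟨hqc, hqn, hqh, hql⟩ := hq
    obtain ⟨s, t, rfl, hρ₂t⟩ := sublist_pair_decomp hb
    obtain ⟨u, v, rfl, hρ₁v⟩ := sublist_pair_decomp h
    obtain ⟨v₁, v₂, rfl⟩ := List.append_of_mem hρ₁v
    -- walk w = s ++ ρ₁ :: v₂ from ι to o avoiding ρ₂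
    set w := s ++ ρ₁ :: v₂ with hw
    have hwc : w.Chain' E := by
      unfold List.Chain' at hpc ⊢; rw [hw, List.isChain_append]
      rw [List.isChain_append] at hpc
      refine ⟨hpc.1, ?_, ?_⟩
      · exact hqc.suffix ⟨u ++ ρ₂ :: v₁, by simp⟩
      · intro a ha b hb'
        exact hpc.2.2 a ha b hb'
    have hwh : w.head? = some ι := by
      rw [← hph, hw]; cases s <;> simp
    have hwl : w.getLast? = some o := by
      rw [← hql, hw, List.getLast?_append]
      have : (u ++ ρ₂ :: (v₁ ++ ρ₁ :: v₂)) = (u ++ ρ₂ :: v₁) ++ (ρ₁ :: v₂) := by simp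
      rw [this, List.getLast?_append]
      obtain ⟨y, hy⟩ : ∃ y, (ρ₁ :: v₂).getLast? = some y :=
        ⟨(ρ₁ :: v₂).getLast (by simp), List.getLast?_eq_getLast _⟩
      rw [hy]; simp
    have hρ₂w : ρ₂ ∉ w := by
      rw [hw]
      intro hmem
      rcases List.mem_append.1 hmem with hin | hin
      · -- ρ₂ ∈ s contradicts p nodup (ρ₂ ∈ t)
        have hd := (List.nodup_append.1 hpn).2.2
        exact hd _ hin _ (List.mem_cons_of_mem _ hρ₂t) rfl
      · rcases List.mem_cons.1 hin with hin | hin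
        · exact hne hin.symm
        · -- ρ₂ ∈ v₂ contradicts q nodup
          have := (List.nodup_append.1 hqn).2.1
          have h2' : ρ₂ ∉ v₁ ++ ρ₁ :: v₂ := (List.nodup_cons.1 this).1
          exact h2' (List.mem_append.2 (Or.inr (List.mem_cons_of_mem _ hin)))
    obtain ⟨r, hr1, hr2, hr3, hr4, hr5⟩ :=
      chain_extract E w.length w le_rfl hwc (by rw [hw]; simp)
    have hr : IoSPath E ι o r := ⟨hr1, hr2, by rw [hr3, hwh], by rw [hr4, hwl]⟩
    exact hρ₂w (hr5 ρ₂ (h2 r hr))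
end

section
/- Let G be a core input-output network, let ρ be a super-simple node of G, and let κ be any node of G. Then ρ is a super-simple node of the input-output network G(κ) (same graph with input ι and output κ) if and only if ρ ⪯ σᵘ(κ), where σᵘ(κ) = κ if κ is simple, and σᵘ(κ) is a minimal upstream simple node admitting an appendage path to κ if κ is appendage. -/
section Helpers

open List

variable {V : Type*} {E : V → V → Prop}

/-- Decomposition of a two-element sublist. -/
lemma pair_sublist {x y : V} {p : List V} :
    [x, y] <+ p ↔ ∃ u v, p = u ++ x :: v ∧ y ∈ v := by
  constructor
  · intro h
    rw [List.cons_sublist_iff] at h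
    obtain ⟨r₁, r₂, rfl, hx, hy⟩ := h
    obtain ⟨s, t, rfl⟩ := List.append_of_mem hx
    exact ⟨s, t ++ r₂, by simp, by
      exact List.mem_append_right t (List.singleton_sublist.1 hy)⟩
  · rintro ⟨u, v, rfl, hy⟩
    exact ((List.singleton_sublist.2 hy).cons₂ x).trans (List.sublist_append_right u (x :: v))

/-- In a nodup list, two distinct members occur in one of the two orders. -/
lemma mem_pair_sublist {a b : V} {p : List V} (hn : p.Nodup) (ha : a ∈ p) (hb : b ∈ p)
    (hne : a ≠ b) : [a, b] <+ p ∨ [b, a] <+ p := by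
  obtain ⟨u, v, rfl⟩ := List.append_of_mem ha
  rcases List.mem_append.1 hb with h | h
  · obtain ⟨s, t, rfl⟩ := List.append_of_mem h
    refine Or.inr (pair_sublist.2 ⟨s, t ++ a :: v, by simp, ?_⟩)
    exact List.mem_append_right t List.mem_cons_self
  · rcases List.mem_cons.1 h with rfl | h
    · exact absurd rfl hne
    · exact Or.inl (pair_sublist.2 ⟨u, v, rfl, h⟩)

/-- "Before" on a nodup list is transitive. -/
lemma before_trans {a b c : V} : ∀ {l : List V}, l.Nodup → [a, b] <+ l → [b, c] <+ l →
    [a, c] <+ l := by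
  intro l
  induction l with
  | nil => intro _ hab _; exact absurd (List.sublist_nil.1 hab) (by simp)
  | cons x t ih =>
    intro hn hab hbc
    have hxt : x ∉ t := (List.nodup_cons.1 hn).1
    cases hab with
    | cons _ h1 =>
      cases hbc with
      | cons _ h2 => exact (ih (List.nodup_cons.1 hn).2 h1 h2).cons x
      | cons_cons _ h2 =>
        have : b ∈ t := by
          have := h1.subset; exact this (by simp)
        exact absurd this hxt
    | cons_cons _ h1 =>
      cases hbc with
      | cons _ h2 =>
        have hc : c ∈ t := h2.subset (by simp)
        exact (List.singleton_sublist.2 hc).cons₂ a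
      | cons_cons _ h2 =>
        exact absurd (List.singleton_sublist.1 h1) hxt

/-- A two-element sublist of a nodup list has distinct entries. -/
lemma pair_sublist_ne {a b : V} {p : List V} (hn : p.Nodup) (h : [a, b] <+ p) : a ≠ b := by
  rintro rfl
  exact (by simp : ¬ ([a, a] : List V).Nodup) (h.nodup hn)

/-- Splitting a simple path at an occurrence of a node. -/
lemma spath_split {s t x : V} {u v : List V} (h : IsSPath E s t (u ++ x :: v)) :
    IsSPath E s x (u ++ [x]) ∧ IsSPath E x t (x :: v) := by
  obtain ⟨hc, hn, hh, hl⟩ := h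
  have hpre : (u ++ [x]) <+: (u ++ x :: v) := ⟨v, by simp⟩
  have hsuf : (x :: v) <:+ (u ++ x :: v) := ⟨u, rfl⟩
  refine ⟨⟨hc.prefix hpre, hpre.sublist.nodup hn, ?_, by simp⟩,
    ⟨hc.suffix hsuf, hsuf.sublist.nodup hn, rfl, ?_⟩⟩
  · cases u with
    | nil => simpa using hh
    | cons c u' => simpa using hh
  · rw [List.getLast?_append_cons] at hl; exact hl

/-- A node of the tail part is not in the head part, by nodup. -/
lemma not_mem_out {u v : List V} {x y : V} (hn : (u ++ x :: v).Nodup) (hy : y ∈ v) :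
    y ∉ u ++ [x] := by
  intro h
  have h3 := List.nodup_append.1 hn
  rcases List.mem_append.1 h with h | h
  · exact h3.2.2 y h y (List.mem_cons_of_mem x hy) rfl
  · have hx : y = x := by simpa using h
    subst hx
    exact (List.nodup_cons.1 h3.2.1).1 hy

/-- Walks (chains) can be shortened to simple paths with the same endpoints,
using only nodes of the walk. -/
lemma exists_spath_subset (E : V → V → Prop) :
    ∀ (n : ℕ) (w : List V), w.length ≤ n → w.Chain' E → ∀ {a b : V},
      w.head? = some a → w.getLast? = some b →
      ∃ p, IsSPath E a b p ∧ ∀ x ∈ p, x ∈ w := by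
  intro n
  induction n with
  | zero =>
    intro w hlen _ a b hh _
    have : w = [] := List.length_eq_zero_iff.1 (Nat.le_zero.1 hlen)
    subst this; simp at hh
  | succ n ih =>
    intro w hlen hc a b hh hl
    by_cases hn : w.Nodup
    · exact ⟨w, ⟨hc, hn, hh, hl⟩, fun _ hx => hx⟩
    · obtain ⟨x, hdup⟩ := List.exists_duplicate_iff_not_nodup.2 hn
      have hxx : [x, x] <+ w := List.duplicate_iff_sublist.1 hdup
      obtain ⟨u, v, rfl, hxv⟩ := pair_sublist.1 hxx
      obtain ⟨v₁, v₂, rfl⟩ := List.append_of_mem hxv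
      -- w = u ++ x :: (v₁ ++ x :: v₂); shorten to u ++ x :: v₂
      have hctriple := List.isChain_append.1 hc
      have hsufc : List.Chain' E (x :: v₂) :=
        hc.suffix ⟨u ++ x :: v₁, by simp⟩
      have hc' : List.Chain' E (u ++ x :: v₂) := by
        refine hctriple.1.append hsufc ?_
        intro p hp q hq
        exact hctriple.2.2 p hp q (by simpa using hq)
      have hh' : (u ++ x :: v₂).head? = some a := by
        cases u with
        | nil => simpa using hh
        | cons c u' => simpa using hh
      have hl' : (u ++ x :: v₂).getLast? = some b := by
        rw [List.getLast?_append_cons] at hl ⊢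
        rw [show x :: (v₁ ++ x :: v₂) = (x :: v₁) ++ x :: v₂ by simp,
          List.getLast?_append_cons] at hl
        exact hl
      have hlen' : (u ++ x :: v₂).length ≤ n := by
        simp only [List.length_append, List.length_cons] at hlen ⊢
        omega
      obtain ⟨p, hp, hsub⟩ := ih (u ++ x :: v₂) hlen' hc' hh' hl'
      refine ⟨p, hp, fun y hy => ?_⟩
      have := hsub y hy
      simp only [List.mem_append, List.mem_cons] at this ⊢
      tauto

/-- Walks realize reflexive-transitive reachability. -/
lemma walk_of_rtg {a b : V} (h : Relation.ReflTransGen E a b) :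
    ∃ w : List V, w.Chain' E ∧ w.head? = some a ∧ w.getLast? = some b := by
  induction h with
  | refl => exact ⟨[a], List.isChain_singleton a, rfl, rfl⟩
  | @tail b' c h1 h2 ih =>
    obtain ⟨w, hc, hh, hl⟩ := ih
    refine ⟨w ++ [c], ?_, ?_, by simp⟩
    · refine hc.append (by simp) ?_
      intro p hp q hq
      have hp' : p = b' := by
        have : some p = some b' := by rw [← hp, hl]
        exact Option.some_injective _ this
      have hq' : q = c := Eq.symm (by simpa using hq)
      rw [hp', hq']; exact h2
    · obtain ⟨t, rfl⟩ := List.head?_eq_some_iff.1 hh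
      simp

/-- Key lemma: if super-simple `ρ` occurs strictly before `a` on some `ιo`-simple
path, then every walk from `ι` to `a` passes through `ρ`. -/
lemma superSimple_mem_walk {ι o ρ a : V} (hρ : SuperSimple E ι o ρ)
    (hocc : OccBefore E ι o ρ a) (w : List V) (hc : w.Chain' E) (hh : w.head? = some ι)
    (hl : w.getLast? = some a) : ρ ∈ w := by
  by_contra hnot
  obtain ⟨p, hp, hsub⟩ := hocc
  obtain ⟨u, v, rfl, hav⟩ := pair_sublist.1 hsub
  obtain ⟨v₁, v₂, rfl⟩ := List.append_of_mem hav
  -- p = u ++ ρ :: (v₁ ++ a :: v₂)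
  have hp' : IsSPath E ι o ((u ++ ρ :: v₁) ++ a :: v₂) := by
    rw [show (u ++ ρ :: v₁) ++ a :: v₂ = u ++ ρ :: (v₁ ++ a :: v₂) by simp]
    exact hp
  have hsufp : IsSPath E a o (a :: v₂) := (spath_split hp').2
  have hρnot2 : ρ ∉ a :: v₂ := by
    have hn := hp.2.1
    have h2 : (ρ :: (v₁ ++ a :: v₂)).Nodup := (List.nodup_append.1 hn).2.1
    have h3 : ρ ∉ v₁ ++ a :: v₂ := (List.nodup_cons.1 h2).1
    intro h
    exact h3 (List.mem_append_right _ h)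
  obtain ⟨w', rfl⟩ := List.head?_eq_some_iff.1 hh
  -- walk ι :: w' ++ v₂ from ι to o avoiding ρ
  have hcW : ((ι :: w') ++ v₂).Chain' E := by
    refine hc.append (hsufp.1.tail) ?_
    intro pp hpp q hq
    have hpa : pp = a := by
      have : some pp = some a := by rw [← hpp, hl]
      exact Option.some_injective _ this
    subst hpa
    exact (List.isChain_cons.1 hsufp.1).1 q hq
  have hlW : ((ι :: w') ++ v₂).getLast? = some o := by
    cases v₂ with
    | nil =>
      have : a = o := by simpa using hsufp.2.2.2
      simpa [this] using hl
    | cons c v₂' =>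
      rw [List.getLast?_append_of_ne_nil _ (by simp)]
      have := hsufp.2.2.2
      rwa [List.getLast?_cons_cons] at this
  obtain ⟨q, hq, hqsub⟩ := exists_spath_subset E ((ι :: w') ++ v₂).length _ le_rfl hcW
    (a := ι) (by simp) hlW
  have hρq : ρ ∈ q := hρ q hq
  rcases List.mem_append.1 (hqsub ρ hρq) with h | h
  · exact hnot h
  · exact hρnot2 (List.mem_cons_of_mem a h)

/-- Asymmetry of occurrence relative to a super-simple node. -/
lemma occBefore_asymm {ι o ρ a : V} (hρ : SuperSimple E ι o ρ)
    (h1 : OccBefore E ι o a ρ) (h2 : OccBefore E ι o ρ a) : False := by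
  obtain ⟨p, hp, hsub⟩ := h1
  obtain ⟨u, v, rfl, hρv⟩ := pair_sublist.1 hsub
  have hpre := (spath_split hp).1
  have hρnot : ρ ∉ u ++ [a] := not_mem_out hp.2.1 hρv
  exact hρnot (superSimple_mem_walk hρ h2 _ hpre.1 hpre.2.2.1 hpre.2.2.2)

/-- Last element of a list satisfying a predicate. -/
lemma exists_last_sat (P : V → Prop) :
    ∀ (q : List V), (∃ x ∈ q, P x) →
      ∃ u x v, q = u ++ x :: v ∧ P x ∧ ∀ y ∈ v, ¬ P y := by
  intro q
  induction q with
  | nil => simp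
  | cons c t ih =>
    intro h
    by_cases ht : ∃ x ∈ t, P x
    · obtain ⟨u, x, v, rfl, hx, hv⟩ := ih ht
      exact ⟨c :: u, x, v, rfl, hx, hv⟩
    · have hcP : P c := by
        rcases h with ⟨x, hx, hPx⟩
        rcases List.mem_cons.1 hx with rfl | hx
        · exact hPx
        · exact absurd ⟨x, hx, hPx⟩ ht
      exact ⟨[], c, t, rfl, hcP, fun y hy hPy => ht ⟨y, hy, hPy⟩⟩

end Helpers

/-- A super-simple node `ρ` of `G` is super-simple in `G(κ)` iff
`ρ ⪯ σᵘ(κ)`. -/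
theorem shared_superSimple {V : Type*} (E : V → V → Prop) (ι o : V)
    (hcore : Core E ι o) (ρ κ σu : V)
    (hρ : SuperSimple E ι o ρ) (hσ : IsSigmaU E ι o κ σu) :
    SuperSimple E ι κ ρ ↔ SLe E ι o ρ σu := by
  classical
  obtain ⟨w₀, hc₀, hh₀, hl₀⟩ := walk_of_rtg (hcore ι).2
  obtain ⟨p₀, hp₀, -⟩ := exists_spath_subset E w₀.length w₀ le_rfl hc₀ hh₀ hl₀
  have hρsimple : SimpleNode E ι o ρ := ⟨p₀, hp₀, hρ p₀ hp₀⟩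
  constructor
  · intro hSS
    have hσusimple : SimpleNode E ι o σu := by
      rcases hσ with ⟨hκs, rfl⟩ | ⟨_, hs, _, _⟩
      exacts [hκs, hs]
    obtain ⟨p, hp, hσup⟩ := hσusimple
    have hρp : ρ ∈ p := hρ p hp
    by_cases heq : ρ = σu
    · exact Or.inr (Or.inl ⟨heq, hρ⟩)
    rcases mem_pair_sublist hp.2.1 hρp hσup heq with hsub | hsub
    · exact Or.inl ⟨heq, ρ, hρ, Or.inl rfl, Or.inr ⟨p, hp, hsub⟩⟩
    · exfalso
      obtain ⟨u, v, rfl, hρv⟩ := pair_sublist.1 hsub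
      have hpre := (spath_split hp).1
      have hρnot : ρ ∉ u ++ [σu] := not_mem_out hp.2.1 hρv
      rcases hσ with ⟨hκs, rfl⟩ | ⟨hκapp, hσs, ⟨r, hr⟩, hmin⟩
      · exact hρnot (hSS _ hpre)
      · obtain ⟨rt, hrt⟩ := List.head?_eq_some_iff.1 hr.1.2.2.1
        have hrtne : rt ≠ [] := by
          rintro rfl
          have hκσ : σu = κ := by
            have := hr.1.2.2.2; rw [hrt] at this; simpa using this
          exact hκapp (hκσ ▸ hσs)
        have hrc : List.Chain' E (σu :: rt) := by rw [← hrt]; exact hr.1.1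
        have hcW : ((u ++ [σu]) ++ rt).Chain' E := by
          refine hpre.1.append hrc.tail ?_
          intro pp hpp q' hq'
          have hppσ : pp = σu := by
            have h1 : (u ++ [σu]).getLast? = some σu := List.getLast?_concat
            rw [h1] at hpp
            exact (Option.some_injective _ hpp).symm
          subst hppσ
          exact (List.isChain_cons.1 hrc).1 q' hq'
        have hhW : ((u ++ [σu]) ++ rt).head? = some ι := by
          obtain ⟨P', hP'⟩ := List.head?_eq_some_iff.1 hpre.2.2.1
          rw [hP']; simp
        have hlW : ((u ++ [σu]) ++ rt).getLast? = some κ := by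
          rw [List.getLast?_append_of_ne_nil _ hrtne]
          have h2 : r.getLast? = some κ := hr.1.2.2.2
          rw [hrt, show σu :: rt = [σu] ++ rt from rfl,
            List.getLast?_append_of_ne_nil _ hrtne] at h2
          exact h2
        obtain ⟨q', hq', hq'sub⟩ := exists_spath_subset E _ _ le_rfl hcW hhW hlW
        have hρq' : ρ ∈ q' := hSS q' hq'
        rcases List.mem_append.1 (hq'sub ρ hρq') with h | h
        · exact hρnot h
        · have hρr : ρ ∈ r := by rw [hrt]; exact List.mem_cons_of_mem _ h
          have hρκ : ρ ≠ κ := fun hh => hκapp (hh ▸ hρsimple)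
          have hρσu : ρ ≠ σu := (pair_sublist_ne hp.2.1 hsub).symm
          exact (hr.2.2 ρ hρr hρσu hρκ) hρsimple
  · intro hle
    have hcase : ρ = σu ∨ OccBefore E ι o ρ σu := by
      rcases hle with ⟨hne, ρ₀, hρ₀, h1, h2⟩ | ⟨heq, _⟩ | ⟨ρ₁, ρ₂, hadj, hρmem, _⟩
      · rcases h1 with rfl | hocc1
        · rcases h2 with h2 | h2
          · exact absurd h2.symm hne
          · exact Or.inr h2
        · rcases h2 with rfl | hocc2
          · exact Or.inr hocc1
          · obtain ⟨p', hp', hsub'⟩ := hocc2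
            have hρp' : ρ ∈ p' := hρ p' hp'
            have hρ₀p' : ρ₀ ∈ p' := hsub'.subset (by simp)
            by_cases hρρ₀ : ρ = ρ₀
            · subst hρρ₀; exact Or.inr ⟨p', hp', hsub'⟩
            rcases mem_pair_sublist hp'.2.1 hρp' hρ₀p' hρρ₀ with hs | hs
            · exact Or.inr ⟨p', hp', before_trans hp'.2.1 hs hsub'⟩
            · exact absurd hocc1 fun h => occBefore_asymm hρ₀ h ⟨p', hp', hs⟩
      · exact Or.inl heq
      · obtain ⟨-, h1, h2⟩ := hρmem
        exact absurd ⟨ρ, hρ, h1, h2⟩ hadj.2.2.2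
    intro q hq
    rcases hσ with ⟨hκs, rfl⟩ | ⟨hκapp, hσs, ⟨r, hr⟩, hmin⟩
    · rcases hcase with heq | hocc
      · exact heq ▸ List.mem_of_mem_getLast? (Option.mem_def.2 hq.2.2.2)
      · exact superSimple_mem_walk hρ hocc q hq.1 hq.2.2.1 hq.2.2.2
    · by_contra hρq
      have hιs : SimpleNode E ι o ι :=
        ⟨p₀, hp₀, List.mem_of_mem_head? (Option.mem_def.2 hp₀.2.2.1)⟩
      have hιmem : ι ∈ q := List.mem_of_mem_head? (Option.mem_def.2 hq.2.2.1)
      obtain ⟨u, σ', v, rfl, hσ's, hv⟩ :=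
        exists_last_sat (SimpleNode E ι o) q ⟨ι, hιmem, hιs⟩
      have hsplit := spath_split hq
      have hpre := hsplit.1
      have hsuf := hsplit.2
      have happ : AppPath E ι o σ' κ (σ' :: v) := by
        refine ⟨hsuf, ⟨κ, List.mem_of_mem_getLast? (Option.mem_def.2 hsuf.2.2.2), hκapp⟩, ?_⟩
        intro x hx hxσ' _
        rcases List.mem_cons.1 hx with rfl | hx
        · exact absurd rfl hxσ'
        · exact hv x hx
      have hρnotpre : ρ ∉ u ++ [σ'] := fun h =>
        hρq ((List.IsPrefix.sublist ⟨v, by simp⟩ : List.Sublist (u ++ [σ']) (u ++ σ' :: v)).subset h)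
      have hρneσ' : ρ ≠ σ' := by rintro rfl; exact hρq (by simp)
      have hnotocc : ¬ OccBefore E ι o ρ σ' := fun h =>
        hρnotpre (superSimple_mem_walk hρ h _ hpre.1 hpre.2.2.1 hpre.2.2.2)
      obtain ⟨p'', hp'', hσ'p⟩ := hσ's
      have hρp'' : ρ ∈ p'' := hρ p'' hp''
      rcases mem_pair_sublist hp''.2.1 hρp'' hσ'p hρneσ' with hs | hs
      · exact hnotocc ⟨p'', hp'', hs⟩
      have hocc' : OccBefore E ι o σ' ρ := ⟨p'', hp'', hs⟩
      have hσ'ne : σ' ≠ σu := by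
        rintro rfl
        rcases hcase with rfl | hocc
        · exact hρneσ' rfl
        · exact hnotocc hocc
      have hslt : SLt E ι o σ' σu :=
        ⟨hσ'ne, ρ, hρ, Or.inr hocc', hcase.imp (fun h => h.symm) id⟩
      exact hmin σ' ⟨p'', hp'', hσ'p⟩ ⟨σ' :: v, happ⟩ hslt
end

section
/- Let G be a core input-output network, A an appendage subnetwork of G, and κ a node of G not in A. If there exists a directed path from A to κ and every such path passes through a super-simple node ρ of G with σᵈ(A) ⪯ ρ ⪯ σᵘ(κ), then A is an appendage subnetwork of G(κ). -/
section AIAux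
open List

variable {V : Type*}

private lemma AI_pair_of_split {a b : V} {p p1 p2 : List V}
    (hp : p = p1 ++ a :: p2) (hb : b ∈ p2) : [a, b] <+ p := by
  subst hp
  refine List.Sublist.trans ?_ (List.sublist_append_right p1 _)
  exact List.Sublist.cons₂ a (List.singleton_sublist.mpr hb)

private lemma AI_split_of_pair {a b : V} {p : List V} (h : [a, b] <+ p) :
    ∃ p1 p2, p = p1 ++ a :: p2 ∧ b ∈ p2 := by
  induction p with
  | nil => cases h
  | cons x xs ih =>
    cases h with
    | cons _ h' =>
      obtain ⟨p1, p2, rfl, hb⟩ := ih h'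
      exact ⟨x :: p1, p2, rfl, hb⟩
    | cons_cons _ h' =>
      exact ⟨[], xs, rfl, List.singleton_sublist.mp h'⟩

private lemma AI_pair_ne {a b : V} {p : List V} (h : [a, b] <+ p) (hn : p.Nodup) :
    a ≠ b := by
  have := h.nodup hn
  simp_all

private lemma AI_pair_trans {a b c : V} : ∀ {p : List V}, p.Nodup → [a, b] <+ p →
    [b, c] <+ p → [a, c] <+ p := by
  intro p
  induction p with
  | nil => intro _ h; cases h
  | cons x xs ih =>
    intro hn h1 h2
    have hxn : x ∉ xs := (List.nodup_cons.mp hn).1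
    cases h1 with
    | cons _ h1' =>
      have hbxs : b ∈ xs := h1'.subset (by simp)
      cases h2 with
      | cons _ h2' => exact (ih (List.nodup_cons.mp hn).2 h1' h2').cons x
      | cons_cons _ h2' => exact absurd hbxs (by simpa using hxn)
    | cons_cons _ h1' =>
      -- a = x, [b] <+ xs
      have hbxs : b ∈ xs := List.singleton_sublist.mp h1'
      cases h2 with
      | cons _ h2' =>
        have hcxs : c ∈ xs := h2'.subset (by simp)
        exact List.Sublist.cons₂ _ (List.singleton_sublist.mpr hcxs)
      | cons_cons _ h2' => exact absurd hbxs (by simpa using hxn)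

private lemma AI_tricho {a b : V} : ∀ {p : List V}, a ∈ p → b ∈ p → a ≠ b →
    ([a, b] <+ p ∨ [b, a] <+ p) := by
  intro p
  induction p with
  | nil => simp
  | cons x xs ih =>
    intro ha hb hne
    rcases List.mem_cons.mp ha with rfl | ha'
    · have hb' : b ∈ xs := by
        rcases List.mem_cons.mp hb with rfl | h
        · exact absurd rfl hne
        · exact h
      exact Or.inl (List.Sublist.cons₂ a (List.singleton_sublist.mpr hb'))
    · rcases List.mem_cons.mp hb with rfl | hb'
      · exact Or.inr (List.Sublist.cons₂ b (List.singleton_sublist.mpr ha'))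
      · exact (ih ha' hb' hne).imp (List.Sublist.cons x) (List.Sublist.cons x)

private lemma AI_last_split {P : V → Prop} : ∀ {l : List V}, (∃ x ∈ l, P x) →
    ∃ l1 z l2, l = l1 ++ z :: l2 ∧ P z ∧ ∀ w ∈ l2, ¬ P w := by
  intro l
  induction l with
  | nil => simp
  | cons x xs ih =>
    intro h
    by_cases hx : ∃ w ∈ xs, P w
    · obtain ⟨l1, z, l2, rfl, hz, hl2⟩ := ih hx
      exact ⟨x :: l1, z, l2, rfl, hz, hl2⟩
    · have hPx : P x := by
        obtain ⟨w, hw, hPw⟩ := h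
        rcases List.mem_cons.mp hw with rfl | hw'
        · exact hPw
        · exact absurd ⟨w, hw', hPw⟩ hx
      exact ⟨[], x, xs, rfl, hPx, fun w hw hPw => hx ⟨w, hw, hPw⟩⟩

private lemma AI_first_split {P : V → Prop} : ∀ {l : List V}, (∃ x ∈ l, P x) →
    ∃ l1 z l2, l = l1 ++ z :: l2 ∧ P z ∧ ∀ w ∈ l1, ¬ P w := by
  intro l
  induction l with
  | nil => simp
  | cons x xs ih =>
    intro h
    by_cases hx : P x
    · exact ⟨[], x, xs, rfl, hx, by simp⟩
    · have hxs : ∃ w ∈ xs, P w := by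
        obtain ⟨w, hw, hPw⟩ := h
        rcases List.mem_cons.mp hw with rfl | hw'
        · exact absurd hPw hx
        · exact ⟨w, hw', hPw⟩
      obtain ⟨l1, z, l2, rfl, hz, hl1⟩ := ih hxs
      refine ⟨x :: l1, z, l2, rfl, hz, ?_⟩
      intro w hw
      rcases List.mem_cons.mp hw with rfl | hw'
      · exact hx
      · exact hl1 w hw'

end AIAux
section AIAux2
open List

variable {V : Type*} {E : V → V → Prop}

private lemma AI_head_mem {a b : V} {p : List V} (h : IsSPath E a b p) : a ∈ p := by
  obtain ⟨_, _, hh, _⟩ := h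
  cases p with
  | nil => simp at hh
  | cons x xs => simp only [List.head?_cons, Option.some.injEq] at hh; subst hh; simp

private lemma AI_last_mem {a b : V} {p : List V} (h : IsSPath E a b p) : b ∈ p := by
  obtain ⟨_, _, _, hl⟩ := h
  exact List.mem_of_mem_getLast? (by rw [hl]; rfl)

private lemma AI_spath_ne_nil {a b : V} {p : List V} (h : IsSPath E a b p) : p ≠ [] := by
  intro hn; subst hn; simp [IsSPath] at h

private lemma AI_spath_split {a b x : V} {p p1 p2 : List V} (h : IsSPath E a b p)
    (heq : p = p1 ++ x :: p2) :
    IsSPath E a x (p1 ++ [x]) ∧ IsSPath E x b (x :: p2) := by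
  subst heq
  obtain ⟨hc, hn, hh, hl⟩ := h
  have hc' := List.isChain_append.mp hc
  constructor
  · refine ⟨?_, ?_, ?_, ?_⟩
    · refine List.isChain_append.mpr ⟨hc'.1, List.isChain_singleton x, ?_⟩
      intro y hy z hz
      simp only [List.head?_cons, Option.mem_def, Option.some.injEq] at hz
      subst hz
      exact hc'.2.2 y hy x rfl
    · rw [List.nodup_append]
      refine ⟨hn.of_append_left, List.nodup_singleton x, ?_⟩
      intro w hw b hb hwx
      have hd := List.disjoint_of_nodup_append hn
      simp only [List.mem_singleton] at hb
      subst hb; subst hwx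
      exact hd hw (by simp)
    · cases p1 with
      | nil =>
        simp only [List.nil_append] at hh ⊢
        simpa using hh
      | cons y ys =>
        rw [List.head?_append_of_ne_nil _ (by simp)]
        rwa [List.head?_append_of_ne_nil _ (by simp)] at hh
    · simp
  · refine ⟨hc'.2.1, hn.of_append_right, rfl, ?_⟩
    rwa [List.getLast?_append_of_ne_nil _ (by simp)] at hl

private lemma AI_exists_spath {a b : V} (h : Relation.ReflTransGen E a b) :
    ∃ p, IsSPath E a b p := by
  induction h using Relation.ReflTransGen.head_induction_on with
  | refl => exact ⟨[b], List.isChain_singleton b, List.nodup_singleton b, rfl, rfl⟩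
  | head hac _ ih =>
    obtain ⟨p, hp⟩ := ih
    rename_i x c _
    by_cases hxp : x ∈ p
    · obtain ⟨p1, p2, heq⟩ := List.append_of_mem hxp
      exact ⟨x :: p2, (AI_spath_split hp heq).2⟩
    · obtain ⟨hc, hn, hh, hl⟩ := hp
      refine ⟨x :: p, ?_, ?_, rfl, ?_⟩
      · refine List.isChain_cons.mpr ⟨?_, hc⟩
        intro y hy
        rw [hh] at hy
        simp only [Option.mem_def, Option.some.injEq] at hy
        subst hy; exact hac
      · exact List.nodup_cons.mpr ⟨hxp, hn⟩
      · have hpn : p ≠ [] := by intro hnil; subst hnil; simp at hh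
        rw [show x :: p = [x] ++ p from rfl, List.getLast?_append_of_ne_nil _ hpn]
        exact hl

private lemma AI_rtg_of_spath {a b : V} : ∀ {p : List V}, IsSPath E a b p →
    Relation.ReflTransGen E a b := by
  intro p
  induction p generalizing a with
  | nil => intro h; exact absurd rfl (AI_spath_ne_nil h)
  | cons x xs ih =>
    intro h
    obtain ⟨hc, hn, hh, hl⟩ := h
    simp only [List.head?_cons, Option.some.injEq] at hh
    subst hh
    cases xs with
    | nil =>
      simp only [List.getLast?_singleton, Option.some.injEq] at hl
      subst hl; exact Relation.ReflTransGen.refl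
    | cons y ys =>
      have hE := (List.isChain_cons_cons.mp hc).1
      have h2 : IsSPath E y b (y :: ys) :=
        ⟨(List.isChain_cons_cons.mp hc).2, (List.nodup_cons.mp hn).2, rfl, by simpa using hl⟩
      exact Relation.ReflTransGen.head hE (ih h2)

private lemma AI_spath_nodes {T : V → Prop} {a b : V} :
    ∀ {p : List V}, IsSPath (fun x y => E x y ∧ T x ∧ T y) a b p → T a → ∀ x ∈ p, T x := by
  intro p
  induction p generalizing a with
  | nil => intro h; exact absurd rfl (AI_spath_ne_nil h)
  | cons x xs ih =>
    intro h hTa w hw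
    obtain ⟨hc, hn, hh, hl⟩ := h
    simp only [List.head?_cons, Option.some.injEq] at hh
    subst hh
    rcases List.mem_cons.mp hw with rfl | hw'
    · exact hTa
    · cases xs with
      | nil => simp at hw'
      | cons y ys =>
        have hE := (List.isChain_cons_cons.mp hc).1
        have h2 : IsSPath (fun x y => E x y ∧ T x ∧ T y) y b (y :: ys) :=
          ⟨(List.isChain_cons_cons.mp hc).2, (List.nodup_cons.mp hn).2, rfl, by simpa using hl⟩
        exact ih h2 hE.2.2 w hw'

private lemma AI_spath_restrict {T : V → Prop} {a b : V} {p : List V}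
    (h : IsSPath (fun x y => E x y ∧ T x ∧ T y) a b p) (hTa : T a) :
    IsSPath E a b p ∧ ∀ x ∈ p, T x := by
  refine ⟨⟨h.1.imp fun _ _ h' => h'.1, h.2.1, h.2.2.1, h.2.2.2⟩, AI_spath_nodes h hTa⟩

private lemma AI_rtg_restrict {T : V → Prop} {a b : V} :
    ∀ {p : List V}, IsSPath E a b p → (∀ x ∈ p, T x) →
    Relation.ReflTransGen (fun x y => E x y ∧ T x ∧ T y) a b := by
  intro p
  induction p generalizing a with
  | nil => intro h; exact absurd rfl (AI_spath_ne_nil h)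
  | cons x xs ih =>
    intro h hT
    obtain ⟨hc, hn, hh, hl⟩ := h
    simp only [List.head?_cons, Option.some.injEq] at hh
    subst hh
    cases xs with
    | nil =>
      simp only [List.getLast?_singleton, Option.some.injEq] at hl
      subst hl; exact Relation.ReflTransGen.refl
    | cons y ys =>
      have hE := (List.isChain_cons_cons.mp hc).1
      have h2 : IsSPath E y b (y :: ys) :=
        ⟨(List.isChain_cons_cons.mp hc).2, (List.nodup_cons.mp hn).2, rfl, by simpa using hl⟩
      exact Relation.ReflTransGen.head
        ⟨hE, hT _ (by simp), hT y (by simp)⟩ (ih h2 fun w hw => hT w (by simp [hw]))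

end AIAux2
section AIAux3
open List

variable {V : Type*} {E : V → V → Prop} {ι o : V}

/-- Splice: replace the part of an `ιo`-simple path `q` before `z` by any simple
path `R` from `ι` to `z` disjoint from the remainder of `q`. -/
private lemma AI_splice {q q1 q2 R : List V} {z : V} (hq : IoSPath E ι o q)
    (hsp : q = q1 ++ z :: q2) (hR : IsSPath E ι z R)
    (hdisj : ∀ w ∈ q2, w ∉ R) : IoSPath E ι o (R ++ q2) := by
  have hsuf : IsSPath E z o (z :: q2) := (AI_spath_split hq hsp).2
  obtain ⟨hcR, hnR, hhR, hlR⟩ := hR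
  obtain ⟨hcs, hns, hhs, hls⟩ := hsuf
  refine ⟨?_, ?_, ?_, ?_⟩
  · refine List.isChain_append.mpr ⟨hcR, (List.isChain_cons.mp hcs).2, ?_⟩
    intro x hx y hy
    rw [hlR] at hx
    simp only [Option.mem_def, Option.some.injEq] at hx
    subst hx
    exact (List.isChain_cons.mp hcs).1 y hy
  · rw [List.nodup_append]
    exact ⟨hnR, (List.nodup_cons.mp hns).2, fun w hw b hb hwb => hdisj b hb (hwb ▸ hw)⟩
  · rw [List.head?_append_of_ne_nil _ (AI_spath_ne_nil ⟨hcR, hnR, hhR, hlR⟩)]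
    exact hhR
  · cases hq2 : q2 with
    | nil =>
      subst hq2
      simp only [List.append_nil]
      rw [hlR]
      simp only [List.getLast?_singleton, Option.some.injEq] at hls
      rw [hls]
    | cons y ys =>
      rw [List.getLast?_append_of_ne_nil _ (by simp [hq2])]
      rw [hq2] at hls
      rw [show z :: y :: ys = [z] ++ y :: ys from rfl,
        List.getLast?_append_of_ne_nil _ (by simp)] at hls
      exact hls

/-- Key forcing lemma: if `ρ` is super-simple and `R` is a simple path from `ι`
to `ρ`, then the portion of any `ιo`-simple path after `ρ` avoids `R`. -/
private lemma AI_lpre {ρ : V} {R q q1 q2 : List V} (ssρ : SuperSimple E ι o ρ)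
    (hR : IsSPath E ι ρ R) (hq : IoSPath E ι o q) (hsp : q = q1 ++ ρ :: q2) :
    ∀ w ∈ q2, w ∉ R := by
  by_contra hcon
  push_neg at hcon
  obtain ⟨w0, hw0q, hw0R⟩ := hcon
  obtain ⟨c1, z, c2, hc, hzR, hc2⟩ := AI_last_split (P := (· ∈ R)) ⟨w0, hw0q, hw0R⟩
  have hq_eq : q = (q1 ++ ρ :: c1) ++ z :: c2 := by
    rw [hsp, hc]; simp [List.append_assoc]
  obtain ⟨d1, d2, hd⟩ := List.append_of_mem hzR
  have hR1 : IsSPath E ι z (d1 ++ [z]) := (AI_spath_split hR hd).1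
  have hdisj : ∀ w ∈ c2, w ∉ d1 ++ [z] := by
    intro w hw hwR
    refine hc2 w hw ?_
    rw [hd]
    rcases List.mem_append.mp hwR with h | h
    · exact List.mem_append.mpr (Or.inl h)
    · simp only [List.mem_singleton] at h; subst h; simp
  have hW : IoSPath E ι o ((d1 ++ [z]) ++ c2) := AI_splice hq hq_eq hR1 hdisj
  have hρW : ρ ∈ (d1 ++ [z]) ++ c2 := ssρ _ hW
  have hρq2 : ρ ∉ q2 := by
    have hnq2 : (ρ :: q2).Nodup := ((AI_spath_split hq hsp).2).2.1
    exact (List.nodup_cons.mp hnq2).1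
  rcases List.mem_append.mp hρW with h | h
  · rcases List.mem_append.mp h with h' | h'
    · -- ρ ∈ d1 while ρ is the last entry of R = d1 ++ z :: d2 : contradiction
      have hlast : ρ ∈ z :: d2 := by
        have hlR : R.getLast? = some ρ := hR.2.2.2
        rw [hd, List.getLast?_append_of_ne_nil _ (by simp)] at hlR
        exact List.mem_of_mem_getLast? (by rw [hlR]; rfl)
      have hnd := List.disjoint_of_nodup_append (hd ▸ hR.2.1)
      exact hnd h' hlast
    · -- ρ = z ∈ q2
      simp only [List.mem_singleton] at h'
      subst h'
      exact hρq2 (by rw [hc]; exact List.mem_append.mpr (Or.inr (by simp)))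
  · -- ρ ∈ c2 ⊆ q2
    exact hρq2 (by rw [hc]; exact List.mem_append.mpr (Or.inr (by simp [h])))

/-- Everything on a simple path starting at `ι` that lies before a super-simple
node is a simple node. -/
private lemma AI_prefix_simple {ρ c : V} {R R1 R2 : List V} (ssρ : SuperSimple E ι o ρ)
    (hio : ∃ q, IoSPath E ι o q) (hR : IsSPath E ι c R) (hsp : R = R1 ++ ρ :: R2) :
    ∀ v ∈ R1 ++ [ρ], SimpleNode E ι o v := by
  obtain ⟨q, hq⟩ := hio
  have hR1 : IsSPath E ι ρ (R1 ++ [ρ]) := (AI_spath_split hR hsp).1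
  obtain ⟨b1, b2, hb⟩ := List.append_of_mem (ssρ q hq)
  have hdisj := AI_lpre ssρ hR1 hq hb
  have hW : IoSPath E ι o ((R1 ++ [ρ]) ++ b2) := AI_splice hq hb hR1 hdisj
  intro v hv
  exact ⟨_, hW, List.mem_append.mpr (Or.inl hv)⟩

private lemma AI_ss_simple {ρ : V} (ssρ : SuperSimple E ι o ρ)
    (hio : ∃ q, IoSPath E ι o q) : SimpleNode E ι o ρ := by
  obtain ⟨q, hq⟩ := hio
  exact ⟨q, hq, ssρ q hq⟩

/-- A node cannot occur both before and after a super-simple node. -/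
private lemma AI_ord2 {ρ v : V} (ssρ : SuperSimple E ι o ρ)
    (h1 : OccBefore E ι o v ρ) (h2 : OccBefore E ι o ρ v) : False := by
  obtain ⟨q1, hq1, hs1⟩ := h1
  obtain ⟨x1, x2, hx, hρx2⟩ := AI_split_of_pair hs1
  obtain ⟨y1, y2, hy⟩ := List.append_of_mem hρx2
  have hx' : q1 = (x1 ++ v :: y1) ++ ρ :: y2 := by rw [hx, hy]; simp
  have hR : IsSPath E ι ρ ((x1 ++ v :: y1) ++ [ρ]) := (AI_spath_split hq1 hx').1
  obtain ⟨q2, hq2, hs2⟩ := h2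
  obtain ⟨w1, w2, hw, hvw2⟩ := AI_split_of_pair hs2
  exact AI_lpre ssρ hR hq2 hw v hvw2
    (List.mem_append.mpr (Or.inl (by simp)))

/-- Two super-simple nodes occur in the same order on every `ιo`-simple path. -/
private lemma AI_ss_order {ρ1 ρ2 : V} (ss1 : SuperSimple E ι o ρ1)
    (ss2 : SuperSimple E ι o ρ2) (h : OccBefore E ι o ρ1 ρ2) {q : List V}
    (hq : IoSPath E ι o q) : [ρ1, ρ2] <+ q := by
  have hne : ρ1 ≠ ρ2 := by
    obtain ⟨p, hp, hs⟩ := h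
    exact AI_pair_ne hs hp.2.1
  rcases AI_tricho (ss1 q hq) (ss2 q hq) hne with h' | h'
  · exact h'
  · exact absurd h' fun h'' => AI_ord2 ss2 h ⟨q, hq, h''⟩

end AIAux3
section AIAux4
open List

variable {V : Type*} {E : V → V → Prop} {ι o : V}

private lemma AI_subnet_not_ss {ρ1 ρ2 x : V} (hadj : AdjSS E ι o ρ1 ρ2)
    (hx : x ∈ SimpleSubnet E ι o ρ1 ρ2) (ssx : SuperSimple E ι o x) : False :=
  hadj.2.2.2 ⟨x, ssx, hx.2.1, hx.2.2⟩

private lemma AI_sle_ss_right {a b : V} (h : SLe E ι o a b)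
    (ssb : SuperSimple E ι o b) : SLt E ι o a b ∨ a = b := by
  rcases h with h | h | h
  · exact Or.inl h
  · exact Or.inr h.1
  · obtain ⟨ρ1, ρ2, hadj, _, hb⟩ := h
    exact absurd ssb (fun ss => AI_subnet_not_ss hadj hb ss)

private lemma AI_sle_ss_left {a b : V} (h : SLe E ι o a b)
    (ssa : SuperSimple E ι o a) : SLt E ι o a b ∨ a = b := by
  rcases h with h | h | h
  · exact Or.inl h
  · exact Or.inr h.1
  · obtain ⟨ρ1, ρ2, hadj, ha, _⟩ := h
    exact absurd ssa (fun ss => AI_subnet_not_ss hadj ha ss)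

/-- If `σd ⪯ ρ` (`ρ` super-simple) and `ρ` occurs before `s` on an `ιo`-simple
path, then `σd ≺ s`. -/
private lemma AI_lemA_d {ρ σd s : V} (ssρ : SuperSimple E ι o ρ)
    (h1 : SLt E ι o σd ρ ∨ σd = ρ) {r : List V} (hr : IoSPath E ι o r)
    (hsub : [ρ, s] <+ r) : SLt E ι o σd s := by
  have hρs : ρ ≠ s := AI_pair_ne hsub hr.2.1
  rcases h1 with h1 | h1
  · obtain ⟨hne, ρ3, ss3, h3a, h3b⟩ := h1
    have hsub3 : [ρ3, s] <+ r := by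
      rcases h3b with rfl | h3b
      · exact hsub
      · exact AI_pair_trans hr.2.1 (AI_ss_order ss3 ssρ h3b hr) hsub
    have hρ3s : ρ3 ≠ s := AI_pair_ne hsub3 hr.2.1
    refine ⟨?_, ρ3, ss3, h3a, Or.inr ⟨r, hr, hsub3⟩⟩
    rintro rfl
    rcases h3a with h3a | h3a
    · exact hρ3s h3a.symm
    · exact AI_ord2 ss3 h3a ⟨r, hr, hsub3⟩
  · subst h1
    exact ⟨hρs, σd, ssρ, Or.inl rfl, Or.inr ⟨r, hr, hsub⟩⟩

/-- If `ρ ⪯ t` (`ρ` super-simple) and `u` occurs before `ρ` on an `ιo`-simple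
path, then `u ≺ t`. -/
private lemma AI_lemA_u {ρ t u : V} (ssρ : SuperSimple E ι o ρ)
    (h1 : SLt E ι o ρ t ∨ ρ = t) {r : List V} (hr : IoSPath E ι o r)
    (hsub : [u, ρ] <+ r) : SLt E ι o u t := by
  have huρ : u ≠ ρ := AI_pair_ne hsub hr.2.1
  rcases h1 with h1 | h1
  · obtain ⟨hne, ρ2, ss2, h2a, h2b⟩ := h1
    have hsub2 : [u, ρ2] <+ r := by
      rcases h2a with rfl | h2a
      · exact hsub
      · exact AI_pair_trans hr.2.1 hsub (AI_ss_order ssρ ss2 h2a hr)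
    have huρ2 : u ≠ ρ2 := AI_pair_ne hsub2 hr.2.1
    refine ⟨?_, ρ2, ss2, Or.inr ⟨r, hr, hsub2⟩, h2b⟩
    rintro rfl
    rcases h2b with h2b | h2b
    · exact huρ2 h2b
    · exact AI_ord2 ss2 ⟨r, hr, hsub2⟩ h2b
  · subst h1
    exact ⟨huρ, ρ, ssρ, Or.inr ⟨r, hr, hsub⟩, Or.inl rfl⟩

/-- A super-simple node `ρ` with `ρ ⪯ σᵘ(κ)` lies on every `ικ`-simple path. -/
private lemma AI_conj {κ σu ρ : V} (hu : IsSigmaU E ι o κ σu)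
    (ssρ : SuperSimple E ι o ρ) (hw : SLe E ι o ρ σu)
    (hio : ∃ q, IoSPath E ι o q) :
    ∀ p', IoSPath E ι κ p' → ρ ∈ p' := by
  intro p' hp'
  by_contra hρp'
  have hw' : SLt E ι o ρ σu ∨ ρ = σu := AI_sle_ss_left hw ssρ
  -- the "last simple node" u of p', with the tail construction
  have main : ∀ u (g1 g2 : List V), p' = g1 ++ u :: g2 → SimpleNode E ι o u →
      ¬ SLt E ι o u σu → False := by
    intro u g1 g2 hsplit hus hmin
    obtain ⟨r, hr, hur⟩ := hus
    -- select last element of r belonging to g1 ++ [u]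
    have hPu : IsSPath E ι u (g1 ++ [u]) := (AI_spath_split hp' hsplit).1
    obtain ⟨c1, z, c2, hc, hz, hc2⟩ :=
      AI_last_split (P := (· ∈ g1 ++ [u])) ⟨u, hur, by simp⟩
    obtain ⟨d1, d2, hd⟩ := List.append_of_mem hz
    have hRz : IsSPath E ι z (d1 ++ [z]) := (AI_spath_split hPu hd).1
    have hdisj : ∀ w ∈ c2, w ∉ d1 ++ [z] := by
      intro w hw hwR
      exact hc2 w hw (hd ▸ (by
        rcases List.mem_append.mp hwR with h | h
        · exact List.mem_append.mpr (Or.inl h)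
        · simp only [List.mem_singleton] at h; subst h; simp))
    have hW : IoSPath E ι o ((d1 ++ [z]) ++ c2) := AI_splice hr hc hRz hdisj
    have hρW : ρ ∈ (d1 ++ [z]) ++ c2 := ssρ _ hW
    have hρc2 : ρ ∈ c2 := by
      rcases List.mem_append.mp hρW with h | h
      · exfalso
        have h1 : ρ ∈ g1 ++ [u] := by
          rw [hd]
          rcases List.mem_append.mp h with h' | h'
          · exact List.mem_append.mpr (Or.inl h')
          · simp only [List.mem_singleton] at h'; subst h'; simp
        have h2 : ρ ∈ p' := by
          rw [hsplit]
          rcases List.mem_append.mp h1 with h' | h'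
          · exact List.mem_append.mpr (Or.inl h')
          · simp only [List.mem_singleton] at h'; subst h'
            exact List.mem_append.mpr (Or.inr (by simp))
        exact hρp' h2
      · exact h
    -- u occurs before ρ on r
    have huρ : [u, ρ] <+ r := by
      have huc : u ∉ c2 := fun h => hc2 u h (by simp)
      have humem : u ∈ c1 ++ [z] := by
        have : u ∈ r := hur
        rw [hc] at this
        rcases List.mem_append.mp this with h | h
        · exact List.mem_append.mpr (Or.inl h)
        · rcases List.mem_cons.mp h with rfl | h'
          · exact List.mem_append.mpr (Or.inr (by simp))
          · exact absurd h' huc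
      rcases List.mem_append.mp humem with h | h
      · obtain ⟨e1, e2, he⟩ := List.append_of_mem h
        refine AI_pair_of_split (p := r) (p1 := e1) (p2 := e2 ++ z :: c2) ?_ ?_
        · rw [hc, he]; simp
        · exact List.mem_append.mpr (Or.inr (by simp [hρc2]))
      · simp only [List.mem_singleton] at h; subst h
        exact AI_pair_of_split hc hρc2
    exact hmin (AI_lemA_u ssρ hw' hr huρ)
  rcases hu with ⟨hκs, hσu⟩ | ⟨hκa, hσus, hσuap, hmin⟩
  · -- κ simple, σu = κ
    have hκp' : κ ∈ p' := AI_last_mem hp'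
    obtain ⟨g1, g2, hg⟩ := List.append_of_mem hκp'
    refine main κ g1 g2 hg hκs ?_
    intro hlt
    exact hlt.1 hσu.symm
  · -- κ appendage; take the last simple node on p'
    have hιs : SimpleNode E ι o ι := by
      obtain ⟨q, hq⟩ := hio
      exact ⟨q, hq, AI_head_mem hq⟩
    obtain ⟨g1, u, g2, hg, hus, hg2⟩ :=
      AI_last_split (P := SimpleNode E ι o) ⟨ι, AI_head_mem hp', hιs⟩
    have hκg2 : κ ∈ g2 := by
      have hκlast : κ ∈ u :: g2 := by
        have hl : p'.getLast? = some κ := hp'.2.2.2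
        rw [hg, List.getLast?_append_of_ne_nil _ (by simp)] at hl
        exact List.mem_of_mem_getLast? (by rw [hl]; rfl)
      rcases List.mem_cons.mp hκlast with rfl | h
      · exact absurd hus hκa
      · exact h
    have happ : AppPath E ι o u κ (u :: g2) := by
      refine ⟨(AI_spath_split hp' hg).2, ⟨κ, by simp [hκg2], hκa⟩, ?_⟩
      intro x hx hxu hxκ
      rcases List.mem_cons.mp hx with rfl | h
      · exact absurd rfl hxu
      · exact hg2 x h
    exact main u g1 g2 hg hus (hmin u hus ⟨u :: g2, happ⟩)

end AIAux4
/-- If there is a path from the appendage subnetwork `A` to `κ ∉ A` and every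
such path passes through a super-simple node `ρ` with
`σᵈ(A) ⪯ ρ ⪯ σᵘ(κ)`, then `A` is an appendage subnetwork of `G(κ)`. -/
theorem A_induces {V : Type*} (E : V → V → Prop) (ι o : V)
    (hcore : Core E ι o) (A : Set V) (κ σd σu : V)
    (hA : IsAppSubnet E ι o A) (hκ : κ ∉ A)
    (hd : IsSigmaD E ι o A σd) (hu : IsSigmaU E ι o κ σu)
    (hex : ∃ τ ∈ A, Relation.ReflTransGen E τ κ)
    (hall : ∀ τ ∈ A, ∀ p, IsSPath E τ κ p →
      ∃ ρ ∈ p, SuperSimple E ι o ρ ∧ SLe E ι o σd ρ ∧ SLe E ι o ρ σu) :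
    IsAppSubnet E ι κ A := by
  classical
  obtain ⟨τ0, hτ0SA, hAeq⟩ := hA
  have hτ0A : τ0 ∈ A := by
    rw [hAeq]
    exact ⟨hτ0SA, hτ0SA, Relation.ReflTransGen.refl, Relation.ReflTransGen.refl⟩
  have hA_SA : ∀ y ∈ A, SuperAppendage E ι o y := by
    intro y hy; rw [hAeq] at hy; exact hy.2.1
  have hA_app : ∀ y ∈ A, Appendage E ι o y := fun y hy => (hA_SA y hy).1
  have hio : ∃ q, IoSPath E ι o q := AI_exists_spath (hcore ι).2
  have hreach : ∀ y ∈ A, Relation.ReflTransGen E y κ := by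
    intro y hy
    obtain ⟨τ1, hτ1, hτ1κ⟩ := hex
    rw [hAeq] at hy hτ1
    have h1 : Relation.ReflTransGen E y τ0 := Relation.ReflTransGen.mono (fun a b h => h.1) _ _ hy.2.2.2
    have h2 : Relation.ReflTransGen E τ0 τ1 := Relation.ReflTransGen.mono (fun a b h => h.1) _ _ hτ1.2.2.1
    exact (h1.trans h2).trans hτ1κ
  obtain ⟨P0, hP0⟩ := AI_exists_spath (hreach τ0 hτ0A)
  obtain ⟨ρs, hρsP0, hρs_ss, hρs_d, hρs_u⟩ := hall τ0 hτ0A P0 hP0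
  have hconj : ∀ p', IoSPath E ι κ p' → ρs ∈ p' := AI_conj hu hρs_ss hρs_u hio
  have hρs_d' : SLt E ι o σd ρs ∨ σd = ρs := AI_sle_ss_right hρs_d hρs_ss
  -- Q1 : no node of the complement-of-`p` component of `y ∈ A` is simple in G
  have hQ1 : ∀ y ∈ A, ∀ p, IoSPath E ι κ p → ∀ z, SameTCIn E {v | v ∉ p} y z →
      ¬ SimpleNode E ι o z := by
    intro y hy p hp z hz hzs
    have hρs_p : ρs ∈ p := hconj p hp
    obtain ⟨hynp, hznp, hyz, hzy⟩ := hz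
    obtain ⟨α, hα'⟩ := AI_exists_spath hyz
    obtain ⟨hαE, hαT⟩ := AI_spath_restrict hα' hynp
    obtain ⟨a1, s1, a2, hαsp, hs1s, ha1⟩ :=
      AI_first_split (P := SimpleNode E ι o) ⟨z, AI_last_mem hαE, hzs⟩
    have hprefix : IsSPath E y s1 (a1 ++ [s1]) := (AI_spath_split hαE hαsp).1
    have hyapp : Appendage E ι o y := hA_app y hy
    have happ : AppPath E ι o y s1 (a1 ++ [s1]) := by
      refine ⟨hprefix, ⟨y, AI_head_mem hprefix, hyapp⟩, ?_⟩
      intro x hx hxy hxs1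
      rcases List.mem_append.mp hx with h | h
      · exact ha1 x h
      · simp only [List.mem_singleton] at h; exact absurd h hxs1
    have hhd : ¬ SLt E ι o σd s1 := hd.2.2 s1 hs1s ⟨y, hy, a1 ++ [s1], happ⟩
    have hs1np : s1 ∉ p :=
      hαT s1 (by rw [hαsp]; exact List.mem_append.mpr (Or.inr (by simp)))
    obtain ⟨r, hr, hs1r⟩ := hs1s
    have hρsr : ρs ∈ r := hρs_ss r hr
    have hne : s1 ≠ ρs := fun h => hs1np (h ▸ hρs_p)
    rcases AI_tricho hρsr hs1r hne.symm with hcase | hcase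
    · exact hhd (AI_lemA_d hρs_ss hρs_d' hr hcase)
    · -- s1 occurs before ρs on r
      obtain ⟨x1, x2, hx, hρx2⟩ := AI_split_of_pair hcase
      obtain ⟨y1, y2, hy2⟩ := List.append_of_mem hρx2
      have hr_eq : r = (x1 ++ s1 :: y1) ++ ρs :: y2 := by rw [hx, hy2]; simp
      obtain ⟨pa, pb, hpab⟩ := List.append_of_mem hρs_p
      have hRp : IsSPath E ι ρs (pa ++ [ρs]) := (AI_spath_split hp hpab).1
      have hlp := AI_lpre hρs_ss hRp hr hr_eq
      have hW1 : IoSPath E ι o ((pa ++ [ρs]) ++ y2) := AI_splice hr hr_eq hRp hlp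
      have hs1y : Relation.ReflTransGen
          (fun a b => E a b ∧ a ∈ {v | v ∉ p} ∧ b ∈ {v | v ∉ p}) s1 y :=
        (AI_rtg_of_spath (AI_spath_split hα' hαsp).2).trans hzy
      obtain ⟨β, hβ'⟩ := AI_exists_spath hs1y
      obtain ⟨hβE, hβT⟩ := AI_spath_restrict hβ' hs1np
      have hW1mem : ∀ w, w ∈ (pa ++ [ρs]) ++ y2 → w ∈ p ∨ w ∈ y2 := by
        intro w hw
        rcases List.mem_append.mp hw with h | h
        · left
          rw [hpab]
          rcases List.mem_append.mp h with h' | h'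
          · exact List.mem_append.mpr (Or.inl h')
          · simp only [List.mem_singleton] at h'; subst h'
            exact List.mem_append.mpr (Or.inr (by simp))
        · right; exact h
      by_cases hK : ∀ w, (w ∈ a1 ++ [s1] ∨ w ∈ β) → w ∉ (pa ++ [ρs]) ++ y2
      · -- the whole cycle avoids W1 : super-appendage property of y kills s1
        have hyW1 : y ∉ (pa ++ [ρs]) ++ y2 := hK y (Or.inl (AI_head_mem hprefix))
        have hs1W1 : s1 ∉ (pa ++ [ρs]) ++ y2 :=
          hK s1 (Or.inl (List.mem_append.mpr (Or.inr (by simp))))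
        have hsame : SameTCIn E {v | v ∉ (pa ++ [ρs]) ++ y2} y s1 := by
          refine ⟨hyW1, hs1W1, ?_, ?_⟩
          · exact AI_rtg_restrict hprefix fun x hx => hK x (Or.inl hx)
          · exact AI_rtg_restrict hβE fun x hx => hK x (Or.inr hx)
        exact (hA_SA y hy).2 _ hW1 hyW1 s1 hsame ⟨r, hr, hs1r⟩
      · push_neg at hK
        obtain ⟨w, hwK, hwW1⟩ := hK
        have hwnp : w ∉ p := by
          rcases hwK with h | h
          · apply hαT w
            rw [hαsp]
            rcases List.mem_append.mp h with h' | h'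
            · exact List.mem_append.mpr (Or.inl h')
            · simp only [List.mem_singleton] at h'; subst h'
              exact List.mem_append.mpr (Or.inr (by simp))
          · exact hβT w h
        have hwy2 : w ∈ y2 := by
          rcases hW1mem w hwW1 with h | h
          · exact absurd h hwnp
          · exact h
        have hρsw : List.Sublist [ρs, w] r := AI_pair_of_split hr_eq hwy2
        have hwβ : w ∈ β := by
          rcases hwK with h | h
          · exfalso
            rcases List.mem_append.mp h with h' | h'
            · exact ha1 w h' ⟨r, hr, by
                rw [hr_eq]
                exact List.mem_append.mpr (Or.inr (by simp [hwy2]))⟩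
            · simp only [List.mem_singleton] at h'; subst h'
              exact absurd rfl (AI_pair_ne (AI_pair_trans hr.2.1 hcase hρsw) hr.2.1)
          · exact h
        obtain ⟨m1, m2, hm⟩ := List.append_of_mem hwβ
        have hpiece2 : IsSPath E s1 w (m1 ++ [w]) := (AI_spath_split hβE hm).1
        have hpiece2T : ∀ x ∈ m1 ++ [w], x ≠ ρs := by
          intro x hxm hxρ
          have hxβ : x ∈ β := by
            rw [hm]
            rcases List.mem_append.mp hxm with h | h
            · exact List.mem_append.mpr (Or.inl h)
            · simp only [List.mem_singleton] at h; subst h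
              exact List.mem_append.mpr (Or.inr (by simp))
          exact hβT x hxβ (hxρ ▸ hρs_p)
        have hpiece1 : IsSPath E ι s1 (x1 ++ [s1]) := (AI_spath_split hr hx).1
        have hpiece1T : ∀ x ∈ x1 ++ [s1], x ≠ ρs := by
          intro x hxm hxρ
          subst hxρ
          have hnd : r.Nodup := hr.2.1
          rw [hx] at hnd
          have hnd' : ((x1 ++ [s1]) ++ x2).Nodup := by
            rw [List.append_assoc]; exact hnd
          exact List.disjoint_of_nodup_append hnd' hxm hρx2
        obtain ⟨n1, n2, hn⟩ := List.append_of_mem hwy2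
        have hr_eq2 : r = ((x1 ++ s1 :: y1) ++ ρs :: n1) ++ w :: n2 := by
          rw [hr_eq, hn]; simp
        have hpiece3 : IsSPath E w o (w :: n2) := (AI_spath_split hr hr_eq2).2
        have hpiece3T : ∀ x ∈ w :: n2, x ≠ ρs := by
          intro x hxm hxρ
          subst hxρ
          have hnd : r.Nodup := hr.2.1
          rw [hr_eq2] at hnd
          exact List.disjoint_of_nodup_append hnd
            (List.mem_append.mpr (Or.inr (by simp))) hxm
        have rtg1 := AI_rtg_restrict (T := fun v => v ≠ ρs) hpiece1 hpiece1T
        have rtg2 := AI_rtg_restrict (T := fun v => v ≠ ρs) hpiece2 hpiece2T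
        have rtg3 := AI_rtg_restrict (T := fun v => v ≠ ρs) hpiece3 hpiece3T
        obtain ⟨P, hP⟩ := AI_exists_spath ((rtg1.trans rtg2).trans rtg3)
        have hιρs : ι ≠ ρs := hpiece1T ι (AI_head_mem hpiece1)
        obtain ⟨hPE, hPT⟩ := AI_spath_restrict hP hιρs
        exact hPT ρs (hρs_ss P hPE) rfl
  -- C1 : no node of A lies on an ικ-simple path
  have hC1 : ∀ y ∈ A, ∀ p, IoSPath E ι κ p → y ∉ p := by
    intro y hy p hp hmem
    obtain ⟨p1, p2, hsp⟩ := List.append_of_mem hmem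
    have hsuf : IsSPath E y κ (y :: p2) := (AI_spath_split hp hsp).2
    obtain ⟨ρ, hρmem, hρss, _, _⟩ := hall y hy _ hsuf
    rcases List.mem_cons.mp hρmem with heq | hρp2
    · exact hA_app y hy (heq ▸ AI_ss_simple hρss hio)
    · obtain ⟨u1, u2, hu⟩ := List.append_of_mem hρp2
      have hsp2 : p = (p1 ++ y :: u1) ++ ρ :: u2 := by rw [hsp, hu]; simp
      exact hA_app y hy (AI_prefix_simple hρss hio hp hsp2 y
        (List.mem_append.mpr (Or.inl (by simp))))
  -- B : members of complement components of `y ∈ A` in G(κ) are ικ-appendage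
  have hB : ∀ y ∈ A, ∀ p, IoSPath E ι κ p → ∀ z, SameTCIn E {v | v ∉ p} y z →
      ¬ SimpleNode E ι κ z := by
    intro y hy p hp z hz hzs
    obtain ⟨p', hp', hzp'⟩ := hzs
    obtain ⟨t1, t2, ht⟩ := List.append_of_mem hzp'
    have hsuf : IsSPath E z κ (z :: t2) := (AI_spath_split hp' ht).2
    have hT1 : Relation.ReflTransGen
        (fun a b => E a b ∧ (a ∉ p ∨ a ∈ z :: t2) ∧ (b ∉ p ∨ b ∈ z :: t2)) y z :=
      Relation.ReflTransGen.mono (fun a b h => ⟨h.1, Or.inl h.2.1, Or.inl h.2.2⟩) _ _ hz.2.2.1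
    have hT2 : Relation.ReflTransGen
        (fun a b => E a b ∧ (a ∉ p ∨ a ∈ z :: t2) ∧ (b ∉ p ∨ b ∈ z :: t2)) z κ :=
      AI_rtg_restrict hsuf fun x hx => Or.inr hx
    obtain ⟨P, hPr⟩ := AI_exists_spath (hT1.trans hT2)
    obtain ⟨hPE, hPT⟩ := AI_spath_restrict hPr (Or.inl hz.1)
    obtain ⟨ρh, hρhP, hρhss, _, hρhu⟩ := hall y hy P hPE
    have hρhp : ρh ∈ p := AI_conj hu hρhss hρhu hio p hp
    have hρhz : ρh ∈ z :: t2 := by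
      rcases hPT ρh hρhP with h | h
      · exact absurd hρhp h
      · exact h
    have hzsimple : SimpleNode E ι o z := by
      rcases List.mem_cons.mp hρhz with heq | hmem
      · exact heq ▸ AI_ss_simple hρhss hio
      · obtain ⟨v1, v2, hv⟩ := List.append_of_mem hmem
        have hsp2 : p' = (t1 ++ z :: v1) ++ ρh :: v2 := by rw [ht, hv]; simp
        exact AI_prefix_simple hρhss hio hp' hsp2 z
          (List.mem_append.mpr (Or.inl (by simp)))
    exact hQ1 y hy p hp z hz hzsimple
  -- members of A are super-appendage in G(κ)
  have hSA' : ∀ y ∈ A, SuperAppendage E ι κ y := by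
    intro y hy
    refine ⟨?_, fun p hp _ z hz => hB y hy p hp z hz⟩
    intro hs
    obtain ⟨p, hp, hm⟩ := hs
    exact hC1 y hy p hp hm
  -- generic transfer of reachability between node sets
  have hgen : ∀ (s t : Set V) (a b : V), a ∈ s → ReachIn E s a b →
      (∀ w, w ∈ s → ReachIn E s a w → ReachIn E s w b → w ∈ t) →
      ReachIn E t a b := by
    intro s t a b ha hab hw
    obtain ⟨L, hL⟩ := AI_exists_spath hab
    obtain ⟨hLE, hLT⟩ := AI_spath_restrict (T := fun v => v ∈ s) hL ha
    refine AI_rtg_restrict (T := fun v => v ∈ t) hLE ?_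
    intro x hx
    obtain ⟨l1, l2, hl⟩ := List.append_of_mem hx
    exact hw x (hLT x hx) (AI_rtg_of_spath (AI_spath_split hL hl).1)
      (AI_rtg_of_spath (AI_spath_split hL hl).2)
  refine ⟨τ0, hSA' τ0 hτ0A, ?_⟩
  obtain ⟨p0κ, hp0κ⟩ := AI_exists_spath (hcore κ).1
  have hstep1 : ∀ c, SameTCIn E {v | SuperAppendage E ι κ v} τ0 c →
      Appendage E ι o c := by
    intro c hc hcs
    have hsub : ∀ v : V, SuperAppendage E ι κ v → v ∉ p0κ :=
      fun v hv hm => hv.1 ⟨p0κ, hp0κ, hm⟩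
    have h1 : SameTCIn E {v | v ∉ p0κ} τ0 c := by
      refine ⟨hsub τ0 hc.1, hsub c hc.2.1, ?_, ?_⟩
      · exact Relation.ReflTransGen.mono (fun a b h => ⟨h.1, hsub a h.2.1, hsub b h.2.2⟩) _ _ hc.2.2.1
      · exact Relation.ReflTransGen.mono (fun a b h => ⟨h.1, hsub a h.2.1, hsub b h.2.2⟩) _ _ hc.2.2.2
    exact hQ1 τ0 hτ0A p0κ hp0κ c h1 hcs
  have hstep2 : ∀ c, SameTCIn E {v | SuperAppendage E ι κ v} τ0 c →
      SuperAppendage E ι o c := by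
    intro c hc
    refine ⟨hstep1 c hc, ?_⟩
    intro q hq hcq z hz
    have hto : ∀ (a b : V), a ∈ {v | SuperAppendage E ι κ v} →
        ReachIn E {v | SuperAppendage E ι κ v} a b →
        ReachIn E {v | SuperAppendage E ι κ v} τ0 a →
        ReachIn E {v | SuperAppendage E ι κ v} b τ0 →
        ReachIn E {v | v ∉ q} a b := by
      intro a b ha hab hτa hbτ
      refine hgen {v | SuperAppendage E ι κ v} {v | v ∉ q} a b ha hab ?_
      intro w hw h1 h2
      have hwapp : Appendage E ι o w :=
        hstep1 w ⟨hc.1, hw, hτa.trans h1, h2.trans hbτ⟩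
      intro hwq
      exact hwapp ⟨q, hq, hwq⟩
    have hr1 : ReachIn E {v | v ∉ q} τ0 c :=
      hto τ0 c hc.1 hc.2.2.1 Relation.ReflTransGen.refl hc.2.2.2
    have hr2 : ReachIn E {v | v ∉ q} c τ0 :=
      hto c τ0 hc.2.1 hc.2.2.2 hc.2.2.1 Relation.ReflTransGen.refl
    have hτ0q : τ0 ∉ q := fun hm => (hA_SA τ0 hτ0A).1 ⟨q, hq, hm⟩
    have hzc : SameTCIn E {v | v ∉ q} τ0 z :=
      ⟨hτ0q, hz.2.1, hr1.trans hz.2.2.1, hz.2.2.2.trans hr2⟩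
    exact (hA_SA τ0 hτ0A).2 q hq hτ0q z hzc
  apply Set.Subset.antisymm
  · intro x hx
    have hx' : SameTCIn E {v | SuperAppendage E ι o v} τ0 x := by
      rw [hAeq] at hx; exact hx
    have hmemS' : ∀ w, w ∈ {v | SuperAppendage E ι o v} →
        ReachIn E {v | SuperAppendage E ι o v} τ0 w →
        ReachIn E {v | SuperAppendage E ι o v} w τ0 →
        w ∈ {v | SuperAppendage E ι κ v} := by
      intro w hw h1 h2
      have hwA : w ∈ A := by rw [hAeq]; exact ⟨hτ0SA, hw, h1, h2⟩
      exact hSA' w hwA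
    show SameTCIn E {v | SuperAppendage E ι κ v} τ0 x
    refine ⟨hSA' τ0 hτ0A, hSA' x hx, ?_, ?_⟩
    · refine hgen {v | SuperAppendage E ι o v} {v | SuperAppendage E ι κ v} τ0 x
        hτ0SA hx'.2.2.1 ?_
      intro w hw h1 h2
      exact hmemS' w hw h1 (h2.trans hx'.2.2.2)
    · refine hgen {v | SuperAppendage E ι o v} {v | SuperAppendage E ι κ v} x τ0
        hx'.2.1 hx'.2.2.2 ?_
      intro w hw h1 h2
      exact hmemS' w hw (hx'.2.2.1.trans h1) h2
  · intro x hx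
    have hx' : SameTCIn E {v | SuperAppendage E ι κ v} τ0 x := hx
    rw [hAeq]
    show SameTCIn E {v | SuperAppendage E ι o v} τ0 x
    refine ⟨hτ0SA, hstep2 x hx', ?_, ?_⟩
    · refine hgen {v | SuperAppendage E ι κ v} {v | SuperAppendage E ι o v} τ0 x
        hx'.1 hx'.2.2.1 ?_
      intro w hw h1 h2
      exact hstep2 w ⟨hx'.1, hw, h1, h2.trans hx'.2.2.2⟩
    · refine hgen {v | SuperAppendage E ι κ v} {v | SuperAppendage E ι o v} x τ0
        hx'.2.1 hx'.2.2.2 ?_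
      intro w hw h1 h2
      exact hstep2 w ⟨hx'.1, hw, hx'.2.2.1.trans h1, h2⟩
end

section
/- Let G be a core input-output network, A an appendage subnetwork of G, and κ a node of G with σᵘ(κ) ≺ σᵈ(A) in the simple-node partial order. Then A is not an appendage subnetwork of G(κ). -/
namespace KappaAux

open List

variable {V : Type*} {E : V → V → Prop} {ι o : V}

lemma head?_mem {l : List V} {a : V} (h : l.head? = some a) : a ∈ l := by
  cases l with
  | nil => simp at h
  | cons c t => simp at h; simp [h]

lemma getLast?_mem {l : List V} {a : V} (h : l.getLast? = some a) : a ∈ l := by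
  induction l with
  | nil => simp at h
  | cons c t ih =>
    cases t with
    | nil => simp at h; simp [h]
    | cons d u =>
      rw [List.getLast?_cons_cons] at h
      exact List.mem_cons_of_mem _ (ih h)

lemma getLast?_append' (l₁ : List V) {l₂ : List V} (h : l₂ ≠ []) :
    (l₁ ++ l₂).getLast? = l₂.getLast? := by
  rw [List.getLast?_append]
  cases hl : l₂.getLast? with
  | none => exact absurd (List.getLast?_eq_none_iff.mp hl) h
  | some x => rfl

lemma head?_append_cons (s t u : List V) (x : V) :
    (s ++ x :: t).head? = (s ++ x :: u).head? := by
  cases s <;> simp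

lemma head?_append_left {l₁ l₂ : List V} {a : V} (h : l₁.head? = some a) :
    (l₁ ++ l₂).head? = some a := by
  cases l₁ with
  | nil => simp at h
  | cons c t => simp_all

lemma pair_sublist_split {a b : V} {l : List V} (h : [a, b] <+ l) :
    ∃ s t u, l = s ++ a :: (t ++ b :: u) := by
  induction l with
  | nil => nomatch h
  | cons c l ih =>
    cases h with
    | cons _ h' =>
      obtain ⟨s, t, u, rfl⟩ := ih h'
      exact ⟨c :: s, t, u, rfl⟩
    | cons_cons h' =>
      rename_i h''
      obtain ⟨s, t, rfl⟩ := List.append_of_mem (List.singleton_sublist.mp h'')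
      exact ⟨[], s, t, rfl⟩

lemma nodup_pair_sublist_ne {a : V} {l : List V} (hn : l.Nodup) (h : [a, a] <+ l) : False :=
  (List.duplicate_iff_sublist.mpr h).not_nodup hn

lemma exists_split_last {l : List V} {P : V → Prop} (h : ∃ x ∈ l, P x) :
    ∃ s x t, l = s ++ x :: t ∧ P x ∧ ∀ y ∈ t, ¬ P y := by
  induction l with
  | nil => simp at h
  | cons c cl ih =>
    by_cases h' : ∃ x ∈ cl, P x
    · obtain ⟨s, x, t, rfl, hx, ht⟩ := ih h'
      exact ⟨c :: s, x, t, rfl, hx, ht⟩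
    · obtain ⟨x, hx, hPx⟩ := h
      rcases List.mem_cons.mp hx with rfl | hx
      · exact ⟨[], x, cl, rfl, hPx, fun y hy hPy => h' ⟨y, hy, hPy⟩⟩
      · exact absurd ⟨x, hx, hPx⟩ h'

lemma exists_split_first {l : List V} {P : V → Prop} (h : ∃ x ∈ l, P x) :
    ∃ s x t, l = s ++ x :: t ∧ P x ∧ ∀ y ∈ s, ¬ P y := by
  induction l with
  | nil => simp at h
  | cons c cl ih =>
    by_cases hc : P c
    · exact ⟨[], c, cl, rfl, hc, by simp⟩
    · have h' : ∃ x ∈ cl, P x := by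
        obtain ⟨x, hx, hPx⟩ := h
        rcases List.mem_cons.mp hx with rfl | hx
        · exact absurd hPx hc
        · exact ⟨x, hx, hPx⟩
      obtain ⟨s, x, t, rfl, hx, hs⟩ := ih h'
      refine ⟨c :: s, x, t, rfl, hx, ?_⟩
      intro y hy
      rcases List.mem_cons.mp hy with rfl | hy
      · exact hc
      · exact hs y hy

lemma walk_of_rtg {a b : V} (h : Relation.ReflTransGen E a b) :
    ∃ w : List V, w.Chain' E ∧ w.head? = some a ∧ w.getLast? = some b := by
  induction h with
  | refl => exact ⟨[a], List.isChain_singleton _, rfl, rfl⟩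
  | @tail b' c _ e ih =>
    obtain ⟨w, hc, hh, hl⟩ := ih
    refine ⟨w ++ [c], ?_, head?_append_left hh, List.getLast?_concat⟩
    rw [List.Chain', List.isChain_append]
    refine ⟨hc, List.isChain_singleton _, ?_⟩
    intro x hx y hy
    simp only [List.head?_cons, Option.mem_def, Option.some.injEq] at hy
    rw [hl] at hx
    simp only [Option.mem_def, Option.some.injEq] at hx
    subst hx; subst hy; exact e

lemma exists_spath_of_walk {a b : V} :
    ∀ (n : ℕ) (w : List V), w.length ≤ n → w.Chain' E → w.head? = some a →
      w.getLast? = some b → ∃ p, IsSPath E a b p ∧ ∀ x ∈ p, x ∈ w := by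
  intro n
  induction n with
  | zero =>
    intro w hw _ hh _
    rw [List.length_eq_zero_iff.mp (Nat.le_zero.mp hw)] at hh
    simp at hh
  | succ n ih =>
    intro w hw hc hh hl
    by_cases hnd : w.Nodup
    · exact ⟨w, ⟨hc, hnd, hh, hl⟩, fun _ h => h⟩
    · obtain ⟨x, hdup⟩ := List.exists_duplicate_iff_not_nodup.mpr hnd
      obtain ⟨s, t, u, rfl⟩ := pair_sublist_split (List.duplicate_iff_sublist.mp hdup)
      have hassoc : s ++ x :: (t ++ x :: u) = (s ++ x :: t) ++ (x :: u) := by simp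
      rw [hassoc] at hc hl
      obtain ⟨h1, h2, hj⟩ := List.isChain_append.mp hc
      obtain ⟨hs, _, hjs⟩ := List.isChain_append.mp (by
        have : s ++ x :: t = s ++ (x :: t) := rfl
        rw [this] at h1; exact h1)
      have hc' : (s ++ x :: u).Chain' E := by
        rw [show s ++ x :: u = s ++ (x :: u) from rfl, List.Chain', List.isChain_append]
        exact ⟨hs, h2, fun p hp y hy => hjs p hp y (by simpa using hy)⟩
      have hh' : (s ++ x :: u).head? = some a := by
        rw [head?_append_cons s u (t ++ x :: u) x]
        exact hh ▸ congrArg _ (by simp)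
      have hl' : (s ++ x :: u).getLast? = some b := by
        rw [getLast?_append' s (l₂ := x :: u) (by simp)]
        rw [getLast?_append' (s ++ x :: t) (l₂ := x :: u) (by simp)] at hl
        exact hl
      have hlen : (s ++ x :: u).length ≤ n := by
        have := hw
        simp only [List.length_append, List.length_cons] at this ⊢
        omega
      obtain ⟨p, hp, hsub⟩ := ih (s ++ x :: u) hlen hc' hh' hl'
      refine ⟨p, hp, fun y hy => ?_⟩
      have := hsub y hy
      simp only [List.mem_append, List.mem_cons] at this ⊢
      tauto

lemma spath_of_rtg {a b : V} (h : Relation.ReflTransGen E a b) : ∃ p, IsSPath E a b p := by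
  obtain ⟨w, hc, hh, hl⟩ := walk_of_rtg h
  obtain ⟨p, hp, _⟩ := exists_spath_of_walk w.length w le_rfl hc hh hl
  exact ⟨p, hp⟩


/-- Produce an `OccBefore` from a membership split of an ιo-path. -/
lemma occ_of_split {a b : V} {p s t : List V} (hp : IoSPath E ι o p)
    (hsplit : p = s ++ t) (ha : a ∈ s) (hb : b ∈ t) : OccBefore E ι o a b := by
  refine ⟨p, hp, ?_⟩
  rw [hsplit]
  exact List.Sublist.append (List.singleton_sublist.mpr ha) (List.singleton_sublist.mpr hb)

/-- Rigidity: a node cannot occur both before and after a super-simple node. -/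
lemma occ_asymm {ρ a : V} (hss : SuperSimple E ι o ρ)
    (h₁ : OccBefore E ι o a ρ) (h₂ : OccBefore E ι o ρ a) : False := by
  obtain ⟨q, hq, hs1⟩ := h₁
  obtain ⟨q', hq', hs2⟩ := h₂
  by_cases haρ : a = ρ
  · exact nodup_pair_sublist_ne hq.2.1 (haρ ▸ hs1)
  obtain ⟨s, t, u, rfl⟩ := pair_sublist_split hs1
  obtain ⟨s', t', u', rfl⟩ := pair_sublist_split hs2
  -- ρ ∉ s, ρ ∉ u' , a ∉ ... build walk s ++ a :: u'
  have hnq := hq.2.1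
  have hnq' := hq'.2.1
  have hρs : ρ ∉ s := by
    intro hmem
    rw [show s ++ a :: (t ++ ρ :: u) = s ++ (a :: t ++ ρ :: u) by simp] at hnq
    obtain ⟨_, _, hdisj⟩ := List.nodup_append'.mp hnq
    exact hdisj hmem (by simp)
  have hρu' : ρ ∉ u' ∧ ρ ≠ a := by
    rw [show s' ++ ρ :: (t' ++ a :: u') = s' ++ (ρ :: (t' ++ a :: u')) by simp] at hnq'
    obtain ⟨_, hnd2, _⟩ := List.nodup_append'.mp hnq'
    have := List.nodup_cons.mp hnd2
    constructor
    · intro hmem; exact this.1 (by simp [hmem])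
    · intro heq; exact this.1 (by simp [heq])
  -- chain of s ++ a :: u'
  have hcq := hq.1
  have hcq' := hq'.1
  have hchain_s : (s ++ [a]).Chain' E ∧ ∀ x ∈ s.getLast?, E x a := by
    rw [show s ++ a :: (t ++ ρ :: u) = s ++ (a :: (t ++ ρ :: u)) by simp] at hcq
    obtain ⟨h1, h2, hj⟩ := List.isChain_append.mp hcq
    constructor
    · rw [List.Chain', List.isChain_append]
      exact ⟨h1, List.isChain_singleton _, fun x hx y hy => by
        simp only [List.head?_cons, Option.mem_def, Option.some.injEq] at hy
        subst hy; exact hj x hx a (by simp)⟩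
    · exact fun x hx => hj x hx a (by simp)
  have hchain_u' : (a :: u').Chain' E := by
    rw [show s' ++ ρ :: (t' ++ a :: u') = (s' ++ ρ :: t') ++ (a :: u') by simp] at hcq'
    exact (List.isChain_append.mp hcq').2.1
  have hwalk_chain : (s ++ a :: u').Chain' E := by
    rw [show s ++ a :: u' = s ++ (a :: u') from rfl, List.Chain', List.isChain_append]
    exact ⟨(List.isChain_append.mp hchain_s.1).1, hchain_u', fun x hx y hy => by
      simp only [List.head?_cons, Option.mem_def, Option.some.injEq] at hy
      subst hy; exact hchain_s.2 x hx⟩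
  have hwalk_head : (s ++ a :: u').head? = some ι := by
    rw [head?_append_cons s u' (t ++ ρ :: u) a]
    exact hq.2.2.1
  have hwalk_last : (s ++ a :: u').getLast? = some o := by
    rw [getLast?_append' s (l₂ := a :: u') (by simp)]
    have := hq'.2.2.2
    rw [show s' ++ ρ :: (t' ++ a :: u') = (s' ++ ρ :: t') ++ (a :: u') by simp,
      getLast?_append' (s' ++ ρ :: t') (l₂ := a :: u') (by simp)] at this
    exact this
  obtain ⟨p, hp, hsub⟩ := exists_spath_of_walk _ (s ++ a :: u') le_rfl hwalk_chain hwalk_head hwalk_last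
  have hρp : ρ ∈ p := hss p hp
  have := hsub ρ hρp
  simp only [List.mem_append, List.mem_cons] at this
  rcases this with h | h | h
  · exact hρs h
  · exact hρu'.2 h
  · exact hρu'.1 h

/-- Reach along a chain whose nodes all lie in `s`. -/
lemma chain_reach {s : Set V} {b : V} :
    ∀ (c : V) (cs : List V), (c :: cs).Chain' E → (∀ x ∈ c :: cs, x ∈ s) →
      (c :: cs).getLast? = some b → ReachIn E s c b := by
  intro c cs
  induction cs generalizing c with
  | nil =>
    intro _ _ hl
    simp only [List.getLast?_singleton, Option.some.injEq] at hl
    subst hl; exact Relation.ReflTransGen.refl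
  | cons d cs ih =>
    intro hc hm hl
    have e : E c d := (List.isChain_cons_cons.mp hc).1
    refine Relation.ReflTransGen.head ⟨e, hm c (by simp), hm d (by simp)⟩ ?_
    exact ih d (List.isChain_cons_cons.mp hc).2 (fun x hx => hm x (List.mem_cons_of_mem _ hx)) hl

lemma reachIn_mono {s s' : Set V} (h : s ⊆ s') {a b : V} (hr : ReachIn E s a b) :
    ReachIn E s' a b :=
  Relation.ReflTransGen.mono (r := fun x y => E x y ∧ x ∈ s ∧ y ∈ s)
    (p := fun x y => E x y ∧ x ∈ s' ∧ y ∈ s') (fun _ _ ⟨e, hx, hy⟩ => ⟨e, h hx, h hy⟩) _ _ hr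

/-- Upgrade two-way reachability inside `s` to a subset `s'` which contains the whole
strong component. -/
lemma reach_upgrade {s s' : Set V} {a b : V}
    (ha : a ∈ s) (h1 : ReachIn E s a b) (h2 : ReachIn E s b a)
    (hcl : ∀ z, SameTCIn E s a z → z ∈ s') :
    ReachIn E s' a b ∧ ReachIn E s' b a := by
  have fwd : ∀ z, ReachIn E s a z → ReachIn E s z a → ReachIn E s' a z := by
    intro z hz
    induction hz with
    | refl => intro _; exact Relation.ReflTransGen.refl
    | @tail c z hac e ih =>
      intro hza
      have hca : ReachIn E s c a := Relation.ReflTransGen.head e hza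
      have hac' := ih hca
      have hcs' : c ∈ s' := hcl c ⟨ha, e.2.1, hac, hca⟩
      have hzs' : z ∈ s' := hcl z ⟨ha, e.2.2, hac.tail e, hza⟩
      exact hac'.tail ⟨e.1, hcs', hzs'⟩
  have bwd : ∀ z, ReachIn E s z a → ReachIn E s a z → ReachIn E s' z a := by
    intro z hz
    induction hz using Relation.ReflTransGen.head_induction_on with
    | refl => intro _; exact Relation.ReflTransGen.refl
    | @head z c e h ih =>
      intro haz
      have hac : ReachIn E s a c := haz.tail e
      have hca' := ih hac
      have hzs' : z ∈ s' := hcl z ⟨ha, e.2.1, haz, Relation.ReflTransGen.head e h⟩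
      have hcs' : c ∈ s' := hcl c ⟨ha, e.2.2, hac, h⟩
      exact Relation.ReflTransGen.head ⟨e.1, hzs', hcs'⟩ hca'
  exact ⟨fwd b h1 h2, bwd b h2 h1⟩

/-- Super-appendage nodes of `G(κ)` are closed under strong connectivity within the
appendage set of `G(κ)`. -/
lemma superapp_closure {κ τ x : V} (hτ : SuperAppendage E ι κ τ)
    (hx : SameTCIn E {v | Appendage E ι κ v} τ x) : SuperAppendage E ι κ x := by
  obtain ⟨hτm, hxm, hfx, hbx⟩ := hx
  refine ⟨hxm, ?_⟩
  intro p hp _ y hy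
  have hWp : {v | Appendage E ι κ v} ⊆ {v | v ∉ p} := fun v hv hvp => hv ⟨p, hp, hvp⟩
  obtain ⟨_, hyp, hfy, hby⟩ := hy
  exact hτ.2 p hp (hWp hτm) y
    ⟨hWp hτm, hyp, (reachIn_mono hWp hfx).trans hfy, hby.trans (reachIn_mono hWp hbx)⟩


set_option maxHeartbeats 1000000 in
/-- The return lemma: `σd` reaches `τ` inside the complement of `p₀`. -/
lemma return_reach {κ σd τ : V} {p₀ Q r rp rs : List V}
    (hιτ : Relation.ReflTransGen E ι τ)
    (hp₀ : IoSPath E ι κ p₀)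
    (hr : IoSPath E ι o r) (hrsplit : r = rp ++ σd :: rs)
    (hQpath : IsSPath E τ σd Q)
    (hQapp : ∀ x ∈ Q, x ≠ σd → Appendage E ι o x)
    (hτp₀ : τ ∉ p₀)
    (hQp₀ : ∀ x ∈ Q, x ∉ p₀) (hrsp₀ : ∀ x ∈ rs, x ∉ p₀) (hσdp₀ : σd ∉ p₀) :
    ReachIn E {v | v ∉ p₀} σd τ := by
  classical
  -- r facts
  have hσdrs_chain : (σd :: rs).Chain' E := by
    have := hr.1; rw [hrsplit] at this
    exact (List.isChain_append.mp this).2.1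
  have hσd_rs : σd ∉ rs := by
    have := hr.2.1; rw [hrsplit] at this
    exact (List.nodup_cons.mp (List.nodup_append'.mp this).2.1).1
  have hr_simple : ∀ x ∈ rs, SimpleNode E ι o x := fun x hx =>
    ⟨r, hr, by rw [hrsplit]; exact List.mem_append_right _ (List.mem_cons_of_mem _ hx)⟩
  have hrs_lastfact : rs = [] → σd = o := by
    intro h
    have := hr.2.2.2
    rw [hrsplit, h] at this
    rw [show rp ++ [σd] = rp ++ [σd] from rfl, List.getLast?_concat] at this
    exact Option.some.inj this
  have hrs_last : rs ≠ [] → rs.getLast? = some o := by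
    intro h
    have := hr.2.2.2
    rw [hrsplit, show rp ++ σd :: rs = (rp ++ [σd]) ++ rs by simp,
      getLast?_append' _ h] at this
    exact this
  -- get w1 : simple path ι → τ
  obtain ⟨w1, hw1⟩ := spath_of_rtg hιτ
  -- split w1 at the last node belonging to p₀
  have hι_w1 : ι ∈ w1 := head?_mem hw1.2.2.1
  have hι_p₀ : ι ∈ p₀ := head?_mem hp₀.2.2.1
  obtain ⟨l₁, u, l₂, hw1split, hup₀, hl₂⟩ := exists_split_last (l := w1) (P := fun y => y ∈ p₀)
    ⟨ι, hι_w1, hι_p₀⟩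
  have hul₂_chain : (u :: l₂).Chain' E := by
    have := hw1.1; rw [hw1split] at this
    exact (List.isChain_append.mp this).2.1
  have hul₂_nodup : (u :: l₂).Nodup := by
    have := hw1.2.1; rw [hw1split] at this
    exact (List.nodup_append'.mp this).2.1
  have hl₂_ne : l₂ ≠ [] := by
    intro h
    have hlast := hw1.2.2.2
    rw [hw1split, h] at hlast
    rw [List.getLast?_concat] at hlast
    exact hτp₀ (Option.some.inj hlast ▸ hup₀)
  have hl₂_last : l₂.getLast? = some τ := by
    have hlast := hw1.2.2.2
    rw [hw1split, show l₁ ++ u :: l₂ = (l₁ ++ [u]) ++ l₂ by simp,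
      getLast?_append' _ hl₂_ne] at hlast
    exact hlast
  -- Q shape
  have hQlast : Q.getLast? = some σd := hQpath.2.2.2
  obtain ⟨Qt, hQcons⟩ : ∃ Qt, Q = τ :: Qt := by
    cases hQ : Q with
    | nil => exfalso; have := hQpath.2.2.1; rw [hQ] at this; simp at this
    | cons c t =>
      have := hQpath.2.2.1; rw [hQ] at this
      simp only [List.head?_cons, Option.some.injEq] at this
      exact ⟨t, by rw [this]⟩
  by_cases hH1 : ∃ x ∈ l₂, x = σd ∨ x ∈ rs
  · -- the return path exists along w1's tail
    obtain ⟨x, hxl₂, hxcase⟩ := hH1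
    obtain ⟨m₁, m₂, hl₂split⟩ := List.append_of_mem hxl₂
    have hxp₀ : x ∉ p₀ := by
      rcases hxcase with rfl | hx
      · exact hσdp₀
      · exact hrsp₀ x hx
    -- reach x → τ
    have hxm₂_chain : (x :: m₂).Chain' E := by
      have := hul₂_chain
      rw [hl₂split, show u :: (m₁ ++ x :: m₂) = (u :: m₁) ++ x :: m₂ by simp] at this
      exact (List.isChain_append.mp this).2.1
    have hxm₂_last : (x :: m₂).getLast? = some τ := by
      have := hl₂_last
      rw [hl₂split, show m₁ ++ x :: m₂ = m₁ ++ (x :: m₂) from rfl,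
        getLast?_append' _ (by simp)] at this
      exact this
    have hxτ : ReachIn E {v | v ∉ p₀} x τ := by
      refine chain_reach x m₂ hxm₂_chain ?_ hxm₂_last
      intro y hy
      rcases List.mem_cons.mp hy with rfl | hy
      · exact hxp₀
      · exact hl₂ y (by rw [hl₂split]; exact List.mem_append_right _ (List.mem_cons_of_mem _ hy))
    -- reach σd → x
    have hσdx : ReachIn E {v | v ∉ p₀} σd x := by
      rcases hxcase with rfl | hx
      · exact Relation.ReflTransGen.refl
      · obtain ⟨n₁, n₂, hrssplit⟩ := List.append_of_mem hx
        have hch : (σd :: (n₁ ++ [x])).Chain' E := by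
          have : σd :: rs = (σd :: (n₁ ++ [x])) ++ n₂ := by rw [hrssplit]; simp
          exact hσdrs_chain.prefix ⟨n₂, this.symm⟩
        have hlast : (σd :: (n₁ ++ [x])).getLast? = some x := by
          rw [show σd :: (n₁ ++ [x]) = (σd :: n₁) ++ [x] by simp, List.getLast?_concat]
        refine chain_reach σd (n₁ ++ [x]) hch ?_ hlast
        intro y hy
        rcases List.mem_cons.mp hy with rfl | hy
        · exact hσdp₀
        · rcases List.mem_append.mp hy with hy | hy
          · exact hrsp₀ y (by rw [hrssplit]; exact List.mem_append_left _ hy)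
          · simp only [List.mem_singleton] at hy
            exact hy ▸ hxp₀
    exact hσdx.trans hxτ
  · -- contradiction branch: splice an ιo-simple path through an appendage node
    exfalso
    push_neg at hH1
    -- z₀ : first node of l₂ belonging to Q
    have hτl₂ : τ ∈ l₂ := getLast?_mem hl₂_last
    have hτQ : τ ∈ Q := by rw [hQcons]; simp
    obtain ⟨a₁, z₀, a₂, hl₂split, hz₀Q, ha₁⟩ := exists_split_first (l := l₂)
      (P := fun y => y ∈ Q) ⟨τ, hτl₂, hτQ⟩
    have hz₀σd : z₀ ≠ σd := fun h => (hH1 z₀ (by rw [hl₂split]; simp) |>.1) h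
    -- split Q at z₀
    obtain ⟨c₁, c₂, hQsplit⟩ := List.append_of_mem hz₀Q
    have hc₂ne : c₂ ≠ [] := by
      intro h
      have := hQlast
      rw [hQsplit, h, show c₁ ++ [z₀] = c₁ ++ [z₀] from rfl, List.getLast?_concat] at this
      exact hz₀σd (Option.some.inj this)
    have hc₂last : c₂.getLast? = some σd := by
      have := hQlast
      rw [hQsplit, show c₁ ++ z₀ :: c₂ = (c₁ ++ [z₀]) ++ c₂ by simp,
        getLast?_append' _ hc₂ne] at this
      exact this
    have hc₂Q : ∀ y ∈ c₂, y ∈ Q := fun y hy => by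
      rw [hQsplit]; exact List.mem_append_right _ (List.mem_cons_of_mem _ hy)
    have hz₀c₂ : z₀ ∉ c₂ := by
      have := hQpath.2.1
      rw [hQsplit] at this
      exact (List.nodup_cons.mp (List.nodup_append'.mp
        (by rw [show c₁ ++ z₀ :: c₂ = c₁ ++ (z₀ :: c₂) from rfl] at this; exact this)).2.1).1
    -- split p₀ at u
    obtain ⟨m₁p, m₂p, hp₀split⟩ := List.append_of_mem hup₀
    -- the spliced path
    set Inner1 : List V := u :: (a₁ ++ [z₀]) with hInner1
    set Inner2 : List V := c₂ ++ rs with hInner2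
    set P₂ : List V := m₁p ++ (Inner1 ++ Inner2) with hP₂
    -- chains
    have hInner1_chain : Inner1.Chain' E := by
      have : u :: l₂ = Inner1 ++ a₂ := by rw [hInner1, hl₂split]; simp
      exact hul₂_chain.prefix ⟨a₂, this.symm⟩
    have hInner1_last : Inner1.getLast? = some z₀ := by
      rw [hInner1, show u :: (a₁ ++ [z₀]) = (u :: a₁) ++ [z₀] by simp, List.getLast?_concat]
    have hc₂_chain : (z₀ :: c₂).Chain' E := by
      have := hQpath.1
      rw [hQsplit, show c₁ ++ z₀ :: c₂ = c₁ ++ (z₀ :: c₂) from rfl] at this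
      exact (List.isChain_append.mp this).2.1
    have hInner2_chain : Inner2.Chain' E := by
      rw [hInner2, List.Chain', List.isChain_append]
      refine ⟨hc₂_chain.tail, hσdrs_chain.tail, ?_⟩
      intro y hy z hz
      rw [hc₂last] at hy
      simp only [Option.mem_def, Option.some.injEq] at hy
      subst hy
      cases hrs : rs with
      | nil => rw [hrs] at hz; simp at hz
      | cons d t =>
        rw [hrs] at hz
        simp only [List.head?_cons, Option.mem_def, Option.some.injEq] at hz
        subst hz
        have := hσdrs_chain
        rw [hrs] at this
        exact (List.isChain_cons_cons.mp this).1
    have hMid_chain : (Inner1 ++ Inner2).Chain' E := by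
      rw [List.Chain', List.isChain_append]
      refine ⟨hInner1_chain, hInner2_chain, ?_⟩
      intro y hy z hz
      rw [hInner1_last] at hy
      simp only [Option.mem_def, Option.some.injEq] at hy
      subst hy
      cases hc₂ : c₂ with
      | nil => exact absurd hc₂ hc₂ne
      | cons d t =>
        rw [hInner2, hc₂] at hz
        simp only [List.cons_append, List.head?_cons, Option.mem_def, Option.some.injEq] at hz
        subst hz
        have := hc₂_chain
        rw [hc₂] at this
        exact (List.isChain_cons_cons.mp this).1
    have hP₂_chain : P₂.Chain' E := by
      rw [hP₂, List.Chain', List.isChain_append]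
      refine ⟨?_, hMid_chain, ?_⟩
      · have := hp₀.1
        rw [hp₀split, show m₁p ++ u :: m₂p = m₁p ++ (u :: m₂p) from rfl] at this
        exact (List.isChain_append.mp this).1
      · intro y hy z hz
        rw [show Inner1 ++ Inner2 = u :: ((a₁ ++ [z₀]) ++ Inner2) by rw [hInner1]; simp] at hz
        simp only [List.head?_cons, Option.mem_def, Option.some.injEq] at hz
        subst hz
        have := hp₀.1
        rw [hp₀split, show m₁p ++ u :: m₂p = m₁p ++ (u :: m₂p) from rfl] at this
        exact (List.isChain_append.mp this).2.2 y hy u (by simp)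
    -- memberships for disjointness
    have hl₂mem : ∀ y, y ∈ a₁ ∨ y = z₀ → y ∈ l₂ := by
      intro y hy
      rw [hl₂split]
      rcases hy with hy | rfl
      · exact List.mem_append_left _ hy
      · exact List.mem_append_right _ (by simp)
    have hl₂notp₀ : ∀ y ∈ l₂, y ∉ p₀ := hl₂
    -- nodup
    have hP₂_nodup : P₂.Nodup := by
      rw [hP₂, List.nodup_append']
      refine ⟨?_, ?_, ?_⟩
      · have := hp₀.2.1
        rw [hp₀split] at this
        exact (List.nodup_append'.mp (by
          rw [show m₁p ++ u :: m₂p = m₁p ++ (u :: m₂p) from rfl] at this; exact this)).1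
      · -- Nodup (Inner1 ++ Inner2)
        rw [List.nodup_append']
        refine ⟨?_, ?_, ?_⟩
        · -- Inner1 nodup
          rw [hInner1]
          have : (u :: l₂).Nodup := hul₂_nodup
          have hpre : (u :: (a₁ ++ [z₀])) <+ (u :: l₂) := by
            rw [hl₂split]
            exact List.Sublist.cons₂ _ (by
              rw [show a₁ ++ z₀ :: a₂ = (a₁ ++ [z₀]) ++ a₂ by simp]
              exact List.sublist_append_left _ _)
          exact this.sublist hpre
        · -- Inner2 nodup
          rw [hInner2, List.nodup_append']
          refine ⟨?_, ?_, ?_⟩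
          · have := hQpath.2.1
            rw [hQsplit] at this
            exact ((List.nodup_append'.mp (by
              rw [show c₁ ++ z₀ :: c₂ = c₁ ++ (z₀ :: c₂) from rfl] at this
              exact this)).2.1).of_cons
          · have := hr.2.1
            rw [hrsplit] at this
            exact ((List.nodup_append'.mp this).2.1).of_cons
          · -- c₂ disjoint rs
            intro y hyc hyr
            by_cases h : y = σd
            · exact hσd_rs (h ▸ hyr)
            · exact hQapp y (hc₂Q y hyc) h (hr_simple y hyr)
        · -- Inner1 disjoint Inner2
          intro y hy1 hy2
          have hy1' : y = u ∨ (y ∈ a₁ ∨ y = z₀) := by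
            rw [hInner1] at hy1
            rcases List.mem_cons.mp hy1 with h | h
            · exact Or.inl h
            · rcases List.mem_append.mp h with h | h
              · exact Or.inr (Or.inl h)
              · exact Or.inr (Or.inr (by simpa using h))
          rw [hInner2] at hy2
          rcases List.mem_append.mp hy2 with hy2 | hy2
          · -- y ∈ c₂ ⊆ Q
            rcases hy1' with rfl | hy1'
            · exact hQp₀ y (hc₂Q y hy2) hup₀
            · rcases hy1' with hy1' | rfl
              · exact ha₁ y hy1' (hc₂Q y hy2)
              · exact hz₀c₂ hy2
          · -- y ∈ rs
            rcases hy1' with rfl | hy1'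
            · exact hrsp₀ y hy2 hup₀
            · exact (hH1 y (hl₂mem y hy1')).2 hy2
      · -- m₁p disjoint (Inner1 ++ Inner2)
        intro y hym hyI
        have hyp₀ : y ∈ p₀ := by
          rw [hp₀split]; exact List.mem_append_left _ hym
        rcases List.mem_append.mp hyI with hy | hy
        · rcases List.mem_cons.mp (by rw [hInner1] at hy; exact hy) with heq | hy'
          · -- y = u : but u ∉ m₁p by nodup p₀
            subst heq
            have := hp₀.2.1
            rw [hp₀split, show m₁p ++ y :: m₂p = m₁p ++ (y :: m₂p) from rfl] at this
            exact (List.nodup_append'.mp this).2.2 hym (by simp)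
          · rcases List.mem_append.mp hy' with h | h
            · exact hl₂notp₀ y (hl₂mem y (Or.inl h)) hyp₀
            · exact hl₂notp₀ y (hl₂mem y (Or.inr (by simpa using h))) hyp₀
        · rw [hInner2] at hy
          rcases List.mem_append.mp hy with h | h
          · exact hQp₀ y (hc₂Q y h) hyp₀
          · exact hrsp₀ y h hyp₀
    -- head and last
    have hP₂_head : P₂.head? = some ι := by
      rw [hP₂, show Inner1 ++ Inner2 = u :: ((a₁ ++ [z₀]) ++ Inner2) by rw [hInner1]; simp]
      rw [head?_append_cons m₁p ((a₁ ++ [z₀]) ++ Inner2) m₂p u]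
      rw [← hp₀split]
      exact hp₀.2.2.1
    have hP₂_last : P₂.getLast? = some o := by
      have hI2last : Inner2.getLast? = some o := by
        cases hrs : rs with
        | nil =>
          rw [hInner2, hrs, List.append_nil, hc₂last, hrs_lastfact hrs]
        | cons d t =>
          rw [hInner2, getLast?_append' c₂ (l₂ := rs) (by rw [hrs]; simp)]
          exact hrs_last (by rw [hrs]; simp)
      have hI2ne : Inner2 ≠ [] := by
        rw [hInner2]
        intro h
        exact hc₂ne (List.append_eq_nil_iff.mp h).1
      rw [hP₂, getLast?_append' m₁p (l₂ := Inner1 ++ Inner2) (by rw [hInner1]; simp),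
        getLast?_append' Inner1 (l₂ := Inner2) hI2ne]
      exact hI2last
    have hP₂path : IoSPath E ι o P₂ := ⟨hP₂_chain, hP₂_nodup, hP₂_head, hP₂_last⟩
    have hz₀P₂ : z₀ ∈ P₂ := by
      rw [hP₂]
      refine List.mem_append_right _ (List.mem_append_left _ ?_)
      rw [hInner1]; simp
    exact hQapp z₀ hz₀Q hz₀σd ⟨P₂, hP₂path, hz₀P₂⟩


end KappaAux

open KappaAux List

set_option maxHeartbeats 1000000

/-- If `σᵘ(κ) ≺ σᵈ(A)`, then `A` is not an appendage subnetwork of `G(κ)`. -/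
theorem kappa_prec_A {V : Type*} (E : V → V → Prop) (ι o : V)
    (hcore : Core E ι o) (A : Set V) (κ σu σd : V)
    (hA : IsAppSubnet E ι o A)
    (hu : IsSigmaU E ι o κ σu) (hd : IsSigmaD E ι o A σd)
    (hlt : SLt E ι o σu σd) :
    ¬ IsAppSubnet E ι κ A := by
  classical
  intro hκ
  obtain ⟨τ₀, hτ₀, hAeq⟩ := hA
  obtain ⟨hσd_simple, ⟨τ, hτA, Q, hQpath, hQex, hQint⟩, _hmax⟩ := hd
  obtain ⟨τ₁, hτ₁, hA'eq⟩ := hκ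
  -- τ is appendage in G
  have hτ_app : Appendage E ι o τ := by
    have h := hτA
    rw [hAeq] at h
    exact h.2.1.1
  -- τ is super-appendage in G(κ)
  have hτS'_mem : SameTCIn E {v | SuperAppendage E ι κ v} τ₁ τ := by
    have h := hτA
    rw [hA'eq] at h
    exact h
  have hτS' : SuperAppendage E ι κ τ := hτS'_mem.2.1
  have hτ_not_on : ∀ p, IoSPath E ι κ p → τ ∉ p := fun p hp hmem => hτS'.1 ⟨p, hp, hmem⟩
  -- unpack the order hypothesis
  obtain ⟨hne, ρ, hρss, hσuρ, hρσd⟩ := hlt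
  -- paths containing σu and σd
  obtain ⟨w, hw, hσuw⟩ : ∃ w, IoSPath E ι o w ∧ σu ∈ w := by
    rcases hσuρ with h | ⟨w, hw, hsub⟩
    · rcases hρσd with h' | ⟨r, hr, hsub⟩
      · exact absurd (h.trans h'.symm) hne
      · exact ⟨r, hr, h ▸ hρss r hr⟩
    · exact ⟨w, hw, hsub.subset (by simp)⟩
  obtain ⟨r, hr, hσdr⟩ : ∃ r, IoSPath E ι o r ∧ σd ∈ r := by
    rcases hρσd with h | ⟨r, hr, hsub⟩
    · rcases hσuρ with h' | ⟨w', hw', hsub⟩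
      · exact absurd (h'.trans h.symm) hne
      · exact ⟨w', hw', h ▸ hρss w' hw'⟩
    · exact ⟨r, hr, hsub.subset (by simp)⟩
  obtain ⟨wp, ws, hwsplit⟩ := List.append_of_mem hσuw
  obtain ⟨rp, rs, hrsplit⟩ := List.append_of_mem hσdr
  -- ρ is in the σu-suffix of w
  have hρw : ρ ∈ σu :: ws := by
    have hρmem : ρ ∈ w := hρss w hw
    rw [hwsplit] at hρmem
    rcases List.mem_append.mp hρmem with h | h
    · exfalso
      rcases hσuρ with heq | hocc
      · have hnw := hw.2.1
        rw [hwsplit] at hnw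
        exact (List.nodup_append'.mp hnw).2.2 (heq ▸ h) (by simp)
      · exact occ_asymm hρss hocc (occ_of_split hw hwsplit h (by simp))
    · exact h
  have hOccw : ∀ x ∈ wp, OccBefore E ι o x ρ := fun x hx =>
    occ_of_split hw hwsplit hx hρw
  -- every node of rs is strictly after ρ
  have hOccρrs : ∀ x ∈ rs, OccBefore E ι o ρ x := by
    intro x hx
    rcases hρσd with heq | hocc
    · exact occ_of_split hr (show r = (rp ++ [σd]) ++ rs by rw [hrsplit]; simp)
        (List.mem_append_right _ (by simp [heq])) hx
    · have hρr := hρss r hr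
      rw [hrsplit] at hρr
      rcases List.mem_append.mp hρr with h | h
      · exact occ_of_split hr hrsplit h (List.mem_cons_of_mem _ hx)
      · exfalso
        rcases List.mem_cons.mp h with heq | h
        · obtain ⟨q, hq, hsub⟩ := hocc
          exact nodup_pair_sublist_ne hq.2.1 (heq ▸ hsub)
        · exact occ_asymm hρss
            (occ_of_split hr (show r = (rp ++ [σd]) ++ rs by rw [hrsplit]; simp)
              (List.mem_append_right _ (by simp)) h)
            hocc
  -- (a) σd is not in the σu-prefix of w
  have hσd_wp : σd ∉ wp := by
    intro h
    have hocc1 : OccBefore E ι o σd ρ := hOccw σd h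
    rcases hρσd with heq | hocc
    · obtain ⟨q, hq, hsub⟩ := hocc1
      exact nodup_pair_sublist_ne hq.2.1 (by rw [heq] at hsub; exact hsub)
    · exact occ_asymm hρss hocc1 hocc
  -- (b) nodes of rs avoid the σu-prefix of w
  have hrs_wp : ∀ x ∈ rs, x ∉ wp ∧ x ≠ σu := by
    intro x hx
    have hoccρx := hOccρrs x hx
    constructor
    · intro h; exact occ_asymm hρss (hOccw x h) hoccρx
    · intro h
      subst h
      rcases hσuρ with heq | hocc
      · obtain ⟨q, hq, hsub⟩ := hoccρx
        exact nodup_pair_sublist_ne hq.2.1 (by rw [heq] at hsub; exact hsub)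
      · exact occ_asymm hρss hocc hoccρx
  -- simpleness facts
  have hw_simple : ∀ x ∈ w, SimpleNode E ι o x := fun x hx => ⟨w, hw, hx⟩
  have hr_simple : ∀ x ∈ r, SimpleNode E ι o x := fun x hx => ⟨r, hr, hx⟩
  have hσu_simple : SimpleNode E ι o σu := hw_simple σu hσuw
  -- Q facts
  have hQapp : ∀ x ∈ Q, x ≠ σd → Appendage E ι o x := by
    intro x hx hxne
    by_cases hxτ : x = τ
    · exact hxτ ▸ hτ_app
    · exact hQint x hx hxτ hxne
  have hQ_wp : ∀ x ∈ Q, x ∉ wp ∧ x ≠ σu := by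
    intro x hx
    constructor
    · intro h
      by_cases hxσd : x = σd
      · exact hσd_wp (hxσd ▸ h)
      · exact hQapp x hx hxσd (hw_simple x (by rw [hwsplit]; exact List.mem_append_left _ h))
    · intro h
      subst h
      exact hQapp x hx hne hσu_simple
  -- w-prefix facts
  have hwp_chain := List.isChain_append.mp (show ((wp ++ (σu :: ws)).Chain' E) by
    rw [← hwsplit]; exact hw.1)
  have hwp_nodup := List.nodup_append'.mp (show ((wp ++ (σu :: ws)).Nodup) by
    rw [← hwsplit]; exact hw.2.1)
  -- construct the iota-kappa simple path p₀
  obtain ⟨p₀, hp₀, hQp₀, hrsp₀, hσdp₀⟩ :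
      ∃ p₀, IoSPath E ι κ p₀ ∧ (∀ x ∈ Q, x ∉ p₀) ∧ (∀ x ∈ rs, x ∉ p₀) ∧ σd ∉ p₀ := by
    rcases hu with ⟨hκ_simple, heqκ⟩ | ⟨hκ_app, hσu_simple', ⟨B, hBpath, hBex, hBint⟩, _⟩
    · -- κ simple, σu = κ : take the w-prefix up to σu
      subst heqκ
      refine ⟨wp ++ [σu], ⟨?_, ?_, ?_, List.getLast?_concat⟩, ?_, ?_, ?_⟩
      · rw [List.Chain', List.isChain_append]
        refine ⟨hwp_chain.1, List.isChain_singleton _, ?_⟩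
        intro x hx y hy
        simp only [List.head?_cons, Option.mem_def, Option.some.injEq] at hy
        subst hy
        exact hwp_chain.2.2 x hx σu (by simp)
      · rw [List.nodup_append']
        exact ⟨hwp_nodup.1, List.nodup_singleton _, fun a ha hb => by
          simp only [List.mem_singleton] at hb
          exact hwp_nodup.2.2 ha (by simp [hb])⟩
      · rw [show wp ++ [σu] = wp ++ σu :: ([] : List V) from rfl,
          head?_append_cons wp ([] : List V) ws σu, ← hwsplit]
        exact hw.2.2.1
      · intro x hx hmem
        rcases List.mem_append.mp hmem with h | h
        · exact (hQ_wp x hx).1 h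
        · exact (hQ_wp x hx).2 (by simpa using h)
      · intro x hx hmem
        rcases List.mem_append.mp hmem with h | h
        · exact (hrs_wp x hx).1 h
        · exact (hrs_wp x hx).2 (by simpa using h)
      · intro hmem
        rcases List.mem_append.mp hmem with h | h
        · exact hσd_wp h
        · exact hne (List.mem_singleton.mp h).symm
    · -- κ appendage : w-prefix ++ appendage path B
      obtain ⟨Bt, rfl⟩ : ∃ Bt, B = σu :: Bt := by
        cases hB : B with
        | nil => exfalso; have := hBpath.2.2.1; rw [hB] at this; simp at this
        | cons c t =>
          have := hBpath.2.2.1; rw [hB] at this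
          simp only [List.head?_cons, Option.some.injEq] at this
          exact ⟨t, by rw [this]⟩
      have hσuBt : σu ∉ Bt := (List.nodup_cons.mp hBpath.2.1).1
      have hBt_app : ∀ x ∈ Bt, Appendage E ι o x := by
        intro x hx
        by_cases hxκ : x = κ
        · exact hxκ ▸ hκ_app
        · exact hBint x (List.mem_cons_of_mem _ hx) (fun h => hσuBt (h ▸ hx)) hxκ
      have hp₀path : IoSPath E ι κ (wp ++ σu :: Bt) := by
        refine ⟨?_, ?_, ?_, ?_⟩
        · rw [List.Chain', List.isChain_append]
          refine ⟨hwp_chain.1, hBpath.1, ?_⟩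
          intro x hx y hy
          simp only [List.head?_cons, Option.mem_def, Option.some.injEq] at hy
          subst hy
          exact hwp_chain.2.2 x hx σu (by simp)
        · rw [List.nodup_append']
          refine ⟨hwp_nodup.1, hBpath.2.1, ?_⟩
          intro a ha hb
          rcases List.mem_cons.mp hb with rfl | hb
          · exact hwp_nodup.2.2 ha (by simp)
          · exact hBt_app a hb (hw_simple a (by rw [hwsplit]; exact List.mem_append_left _ ha))
        · rw [head?_append_cons wp Bt ws σu, ← hwsplit]
          exact hw.2.2.1
        · rw [getLast?_append' wp (l₂ := σu :: Bt) (by simp)]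
          exact hBpath.2.2.2
      refine ⟨wp ++ σu :: Bt, hp₀path, ?_, ?_, ?_⟩
      · -- Q avoids p₀ (the big splice)
        intro x hx hmem
        rcases List.mem_append.mp hmem with h | h
        · exact (hQ_wp x hx).1 h
        · rcases List.mem_cons.mp h with h | hxBt
          · exact (hQ_wp x hx).2 h
          · -- x ∈ Q ∩ Bt : contradiction by splicing an ιo-path through appendage z
            obtain ⟨q₁, z, q₂, hQsplit, hzBt, hq₂⟩ := exists_split_last (l := Q)
              (P := fun y => y ∈ Bt) ⟨x, hx, hxBt⟩
            have hz_app : Appendage E ι o z := hBt_app z hzBt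
            have hzσd : z ≠ σd := fun h => hz_app (h ▸ hσd_simple)
            obtain ⟨b₁, b₂, hBtsplit⟩ := List.append_of_mem hzBt
            have hq₂ne : q₂ ≠ [] := by
              intro h
              have := hQpath.2.2.2
              rw [hQsplit, h, List.getLast?_concat] at this
              exact hzσd (Option.some.inj this)
            have hq₂last : q₂.getLast? = some σd := by
              have := hQpath.2.2.2
              rw [hQsplit, show q₁ ++ z :: q₂ = (q₁ ++ [z]) ++ q₂ by simp,
                getLast?_append' _ hq₂ne] at this
              exact this
            have hq₂Q : ∀ y ∈ q₂, y ∈ Q := fun y hy => by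
              rw [hQsplit]; exact List.mem_append_right _ (List.mem_cons_of_mem _ hy)
            have hq₂B : ∀ y ∈ q₂, y ∉ σu :: Bt := by
              intro y hy hmem'
              rcases List.mem_cons.mp hmem' with rfl | hmem'
              · exact (hQ_wp y (hq₂Q y hy)).2 rfl
              · exact hq₂ y hy hmem'
            -- the spliced ιo-path
            set FirstC : List V := wp ++ (σu :: (b₁ ++ [z])) with hFirstC
            set SecondC : List V := q₂ ++ rs with hSecondC
            have hBpre_chain : (σu :: (b₁ ++ [z])).Chain' E := by
              have : σu :: Bt = (σu :: (b₁ ++ [z])) ++ b₂ := by rw [hBtsplit]; simp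
              exact hBpath.1.prefix ⟨b₂, this.symm⟩
            have hFirstC_chain : FirstC.Chain' E := by
              rw [hFirstC, List.Chain', List.isChain_append]
              refine ⟨hwp_chain.1, hBpre_chain, ?_⟩
              intro a ha y hy
              simp only [List.head?_cons, Option.mem_def, Option.some.injEq] at hy
              subst hy
              exact hwp_chain.2.2 a ha σu (by simp)
            have hFirstC_last : FirstC.getLast? = some z := by
              rw [hFirstC, show wp ++ (σu :: (b₁ ++ [z])) = (wp ++ σu :: b₁) ++ [z] by simp,
                List.getLast?_concat]
            have hσdrs_chain : (σd :: rs).Chain' E := by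
              have := hr.1; rw [hrsplit] at this
              exact (List.isChain_append.mp this).2.1
            have hzq₂_chain : (z :: q₂).Chain' E := by
              have := hQpath.1
              rw [hQsplit] at this
              exact (List.isChain_append.mp this).2.1
            have hSecondC_chain : SecondC.Chain' E := by
              rw [hSecondC, List.Chain', List.isChain_append]
              refine ⟨hzq₂_chain.tail, hσdrs_chain.tail, ?_⟩
              intro y hy a ha
              rw [hq₂last] at hy
              simp only [Option.mem_def, Option.some.injEq] at hy
              subst hy
              cases hrs : rs with
              | nil => rw [hrs] at ha; simp at ha
              | cons d t =>
                rw [hrs] at ha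
                simp only [List.head?_cons, Option.mem_def, Option.some.injEq] at ha
                subst ha
                have := hσdrs_chain
                rw [hrs] at this
                exact (List.isChain_cons_cons.mp this).1
            have hP_chain : (FirstC ++ SecondC).Chain' E := by
              rw [List.Chain', List.isChain_append]
              refine ⟨hFirstC_chain, hSecondC_chain, ?_⟩
              intro y hy a ha
              rw [hFirstC_last] at hy
              simp only [Option.mem_def, Option.some.injEq] at hy
              subst hy
              cases hq₂c : q₂ with
              | nil => exact absurd hq₂c hq₂ne
              | cons d t =>
                rw [hSecondC, hq₂c] at ha
                simp only [List.cons_append, List.head?_cons, Option.mem_def,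
                  Option.some.injEq] at ha
                subst ha
                have := hzq₂_chain
                rw [hq₂c] at this
                exact (List.isChain_cons_cons.mp this).1
            have hσd_rs : σd ∉ rs := by
              have := hr.2.1; rw [hrsplit] at this
              exact (List.nodup_cons.mp (List.nodup_append'.mp this).2.1).1
            have hq₂_rs_disj : ∀ y ∈ q₂, y ∉ rs := by
              intro y hy hyr
              by_cases h : y = σd
              · exact hσd_rs (h ▸ hyr)
              · refine hQapp y (hq₂Q y hy) h (hr_simple y ?_)
                rw [hrsplit]
                exact List.mem_append_right _ (List.mem_cons_of_mem _ hyr)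
            have hP_nodup : (FirstC ++ SecondC).Nodup := by
              rw [List.nodup_append']
              refine ⟨?_, ?_, ?_⟩
              · rw [hFirstC, List.nodup_append']
                refine ⟨hwp_nodup.1, ?_, ?_⟩
                · have hpre : (σu :: (b₁ ++ [z])) <+ (σu :: Bt) := by
                    rw [hBtsplit]
                    exact List.Sublist.cons₂ _ (by
                      rw [show b₁ ++ z :: b₂ = (b₁ ++ [z]) ++ b₂ by simp]
                      exact List.sublist_append_left _ _)
                  exact hBpath.2.1.sublist hpre
                · intro a ha hb
                  rcases List.mem_cons.mp hb with rfl | hb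
                  · exact hwp_nodup.2.2 ha (by simp)
                  · have haBt : a ∈ Bt := by
                      rw [hBtsplit]
                      rcases List.mem_append.mp hb with h' | h'
                      · exact List.mem_append_left _ h'
                      · exact List.mem_append_right _ (by simp [List.mem_singleton.mp h'])
                    exact hBt_app a haBt
                      (hw_simple a (by rw [hwsplit]; exact List.mem_append_left _ ha))
              · rw [hSecondC, List.nodup_append']
                refine ⟨?_, ?_, hq₂_rs_disj⟩
                · have := hQpath.2.1
                  rw [hQsplit] at this
                  exact ((List.nodup_append'.mp this).2.1).of_cons
                · have := hr.2.1
                  rw [hrsplit] at this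
                  exact ((List.nodup_append'.mp this).2.1).of_cons
              · -- FirstC disjoint SecondC
                intro y hyF hyS
                have hyF' : y ∈ wp ∨ y = σu ∨ y ∈ Bt := by
                  rw [hFirstC] at hyF
                  rcases List.mem_append.mp hyF with h' | h'
                  · exact Or.inl h'
                  · rcases List.mem_cons.mp h' with rfl | h'
                    · exact Or.inr (Or.inl rfl)
                    · refine Or.inr (Or.inr ?_)
                      rw [hBtsplit]
                      rcases List.mem_append.mp h' with h'' | h''
                      · exact List.mem_append_left _ h''
                      · exact List.mem_append_right _ (by simp [List.mem_singleton.mp h''])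
                rw [hSecondC] at hyS
                rcases List.mem_append.mp hyS with hyq | hyr
                · rcases hyF' with h' | h' | h'
                  · exact (hQ_wp y (hq₂Q y hyq)).1 h'
                  · exact hq₂B y hyq (by simp [h'])
                  · exact hq₂B y hyq (List.mem_cons_of_mem _ h')
                · rcases hyF' with h' | h' | h'
                  · exact (hrs_wp y hyr).1 h'
                  · exact (hrs_wp y hyr).2 h'
                  · refine hBt_app y h' (hr_simple y ?_)
                    rw [hrsplit]
                    exact List.mem_append_right _ (List.mem_cons_of_mem _ hyr)
            have hP_head : (FirstC ++ SecondC).head? = some ι := by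
              rw [hFirstC, show (wp ++ (σu :: (b₁ ++ [z]))) ++ SecondC
                  = wp ++ σu :: ((b₁ ++ [z]) ++ SecondC) by simp,
                head?_append_cons wp ((b₁ ++ [z]) ++ SecondC) ws σu, ← hwsplit]
              exact hw.2.2.1
            have hrs_lastfact : rs = [] → σd = o := by
              intro h
              have := hr.2.2.2
              rw [hrsplit, h] at this
              rw [List.getLast?_concat] at this
              exact Option.some.inj this
            have hrs_last : rs ≠ [] → rs.getLast? = some o := by
              intro h
              have := hr.2.2.2
              rw [hrsplit, show rp ++ σd :: rs = (rp ++ [σd]) ++ rs by simp,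
                getLast?_append' _ h] at this
              exact this
            have hP_last : (FirstC ++ SecondC).getLast? = some o := by
              have hS_last : SecondC.getLast? = some o := by
                cases hrs : rs with
                | nil =>
                  rw [hSecondC, hrs, List.append_nil, hq₂last, hrs_lastfact hrs]
                | cons d t =>
                  rw [hSecondC, getLast?_append' q₂ (l₂ := rs) (by rw [hrs]; simp)]
                  exact hrs_last (by rw [hrs]; simp)
              rw [getLast?_append' FirstC (l₂ := SecondC) (by
                rw [hSecondC]
                intro h
                exact hq₂ne (List.append_eq_nil_iff.mp h).1)]
              exact hS_last
            have hzP : z ∈ FirstC ++ SecondC := by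
              refine List.mem_append_left _ ?_
              rw [hFirstC]
              exact List.mem_append_right _ (by simp)
            exact hz_app ⟨FirstC ++ SecondC, ⟨hP_chain, hP_nodup, hP_head, hP_last⟩, hzP⟩
      · intro x hx hmem
        rcases List.mem_append.mp hmem with h | h
        · exact (hrs_wp x hx).1 h
        · rcases List.mem_cons.mp h with h | h
          · exact (hrs_wp x hx).2 h
          · refine hBt_app x h (hr_simple x ?_)
            rw [hrsplit]
            exact List.mem_append_right _ (List.mem_cons_of_mem _ hx)
      · intro hmem
        rcases List.mem_append.mp hmem with h | h
        · exact hσd_wp h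
        · rcases List.mem_cons.mp h with h | h
          · exact hne h.symm
          · exact hBt_app σd h hσd_simple
  -- τ avoids p₀
  have hτp₀ : τ ∉ p₀ := hτ_not_on p₀ hp₀
  -- forward reach τ → σd in the complement of p₀
  obtain ⟨Qt, hQcons⟩ : ∃ Qt, Q = τ :: Qt := by
    cases hQ : Q with
    | nil => exfalso; have := hQpath.2.2.1; rw [hQ] at this; simp at this
    | cons c t =>
      have := hQpath.2.2.1; rw [hQ] at this
      simp only [List.head?_cons, Option.some.injEq] at this
      exact ⟨t, by rw [this]⟩
  have hfwd : ReachIn E {v | v ∉ p₀} τ σd := by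
    refine chain_reach τ Qt ?_ ?_ ?_
    · rw [← hQcons]; exact hQpath.1
    · intro x hx
      exact hQp₀ x (by rw [hQcons]; exact hx)
    · rw [← hQcons]; exact hQpath.2.2.2
  -- backward reach σd → τ in the complement of p₀
  have hbwd : ReachIn E {v | v ∉ p₀} σd τ :=
    return_reach (hcore τ).1 hp₀ hr hrsplit hQpath hQapp hτp₀ hQp₀ hrsp₀ hσdp₀
  -- upgrade to the appendage set of G(κ)
  have hclW : ∀ z, SameTCIn E {v | v ∉ p₀} τ z → z ∈ {v | Appendage E ι κ v} :=
    fun z hz => hτS'.2 p₀ hp₀ hτp₀ z hz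
  have hup1 := reach_upgrade (s := {v | v ∉ p₀}) (s' := {v | Appendage E ι κ v})
    hτp₀ hfwd hbwd hclW
  have hσdW : σd ∈ {v | Appendage E ι κ v} := hclW σd ⟨hτp₀, hσdp₀, hfwd, hbwd⟩
  -- upgrade to the super-appendage set of G(κ)
  have hclS : ∀ z, SameTCIn E {v | Appendage E ι κ v} τ z →
      z ∈ {v | SuperAppendage E ι κ v} := fun z hz => superapp_closure hτS' hz
  have hup2 := reach_upgrade (s := {v | Appendage E ι κ v})
    (s' := {v | SuperAppendage E ι κ v}) hτS'.1 hup1.1 hup1.2 hclS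
  have hσdS' : SuperAppendage E ι κ σd :=
    superapp_closure hτS' ⟨hτS'.1, hσdW, hup1.1, hup1.2⟩
  -- σd belongs to A, contradiction with simplicity of σd in G
  have hσdA : σd ∈ A := by
    rw [hA'eq]
    exact ⟨hτS'_mem.1, hσdS', hτS'_mem.2.2.1.trans hup2.1, hup2.2.trans hτS'_mem.2.2.2⟩
  rw [hAeq] at hσdA
  exact hσdA.2.1.1 hσd_simple
end

section
/- In a core input-output network G, if ρ is a super-simple node and κ is a node with ρ ⪯ σᵘ(κ), then every simple path from ι to κ passes through ρ. -/
section EPTHelpers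

variable {V : Type*} {E : V → V → Prop} {ι o : V}

private lemma ept_head?_append_left {l l' : List V} (h : l ≠ []) :
    (l ++ l').head? = l.head? := by
  cases l with
  | nil => exact absurd rfl h
  | cons a t => simp

private lemma ept_getLast?_cons_ne_none (a : V) (t : List V) :
    ∃ v, (a :: t).getLast? = some v := by
  induction t generalizing a with
  | nil => exact ⟨a, rfl⟩
  | cons c t' ih => rw [List.getLast?_cons_cons]; exact ih c

private lemma ept_getLast?_append_cons (l : List V) (a : V) (t : List V) :
    (l ++ a :: t).getLast? = (a :: t).getLast? := by
  rw [List.getLast?_append]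
  obtain ⟨v, hv⟩ := ept_getLast?_cons_ne_none a t
  rw [hv]; rfl

private lemma ept_walk_of_rtg {a b : V} (h : Relation.ReflTransGen E a b) :
    ∃ p : List V, p.Chain' E ∧ p.head? = some a ∧ p.getLast? = some b := by
  induction h with
  | refl => exact ⟨[a], List.isChain_singleton a, by simp, by simp⟩
  | @tail c d hac hcd ih =>
    obtain ⟨p, hc, hh, hl⟩ := ih
    have hpne : p ≠ [] := by rintro rfl; simp at hh
    refine ⟨p ++ [d], ?_, ?_, List.getLast?_concat⟩
    · refine List.isChain_append.mpr ?_
      refine ⟨hc, List.isChain_singleton d, ?_⟩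
      intro x hx y hy
      rw [hl] at hx
      simp at hx hy
      subst hx; subst hy
      exact hcd
    · rw [ept_head?_append_left hpne]; exact hh

private lemma ept_extract : ∀ (n : ℕ) (p : List V) (a b : V), p.length ≤ n →
    p.Chain' E → p.head? = some a → p.getLast? = some b →
    ∃ q : List V, IsSPath E a b q ∧ ∀ x ∈ q, x ∈ p := by
  intro n
  induction n with
  | zero =>
    intro p a b hlen _ hh _
    cases p with
    | nil => simp at hh
    | cons => simp at hlen
  | succ n ih =>
    intro p a b hlen hc hh hl
    cases p with
    | nil => simp at hh
    | cons a' t =>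
      have ha : a = a' := by symm; simpa using hh
      subst ha
      by_cases hat : a ∈ t
      · obtain ⟨t1, t2, rfl⟩ := List.append_of_mem hat
        have hc2 : (a :: t2).Chain' E :=
          hc.suffix ⟨a :: t1, by simp⟩
        have hl2 : (a :: t2).getLast? = some b := by
          have heq : (a :: (t1 ++ a :: t2)) = (a :: t1) ++ (a :: t2) := by simp
          rw [heq, List.getLast?_append] at hl
          obtain ⟨v, hv⟩ := ept_getLast?_cons_ne_none a t2
          rw [hv] at hl ⊢
          simpa using hl
        have hlen2 : (a :: t2).length ≤ n := by
          simp only [List.length_cons, List.length_append] at hlen ⊢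
          omega
        obtain ⟨q, hq, hsub⟩ := ih (a :: t2) a b hlen2 hc2 (by simp) hl2
        refine ⟨q, hq, fun x hx => ?_⟩
        have := hsub x hx
        simp only [List.mem_cons, List.mem_append] at this ⊢
        tauto
      · cases t with
        | nil =>
          have hb : a = b := by simpa using hl
          subst hb
          exact ⟨[a], ⟨List.isChain_singleton a, by simp, by simp, by simp⟩, by simp⟩
        | cons c t' =>
          have hac : E a c := (List.isChain_cons_cons.mp hc).1
          have hct : (c :: t').Chain' E := (List.isChain_cons_cons.mp hc).2
          have hlt : (c :: t').getLast? = some b := by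
            rw [List.getLast?_cons_cons] at hl; exact hl
          have hlen' : (c :: t').length ≤ n := by
            simp only [List.length_cons] at hlen ⊢; omega
          obtain ⟨q, hq, hsub⟩ := ih (c :: t') c b hlen' hct (by simp) hlt
          obtain ⟨qc, qn, qh, ql⟩ := hq
          have hqne : q ≠ [] := by rintro rfl; simp at qh
          refine ⟨a :: q, ⟨?_, ?_, by simp, ?_⟩, ?_⟩
          · refine List.isChain_cons.mpr ?_
            refine ⟨fun y hy => ?_, qc⟩
            rw [qh] at hy
            simp at hy
            subst hy
            exact hac
          · rw [List.nodup_cons]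
            exact ⟨fun haq => hat (hsub a haq), qn⟩
          · cases q with
            | nil => simp at qh
            | cons q0 qt => rw [List.getLast?_cons_cons]; exact ql
          · intro x hx
            rcases List.mem_cons.mp hx with rfl | hx'
            · exact List.mem_cons_self
            · exact List.mem_cons_of_mem _ (hsub x hx')

private lemma ept_order_mem {p : List V} {x y : V} (hx : x ∈ p) (hy : y ∈ p)
    (hne : x ≠ y) : [x, y].Sublist p ∨ [y, x].Sublist p := by
  induction p with
  | nil => simp at hx
  | cons c t ih =>
    rcases List.mem_cons.mp hx with rfl | hx'
    · have hyt : y ∈ t := by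
        rcases List.mem_cons.mp hy with rfl | h
        · exact absurd rfl hne
        · exact h
      exact Or.inl (List.Sublist.cons₂ _ (List.singleton_sublist.mpr hyt))
    · rcases List.mem_cons.mp hy with rfl | hy'
      · exact Or.inr (List.Sublist.cons₂ _ (List.singleton_sublist.mpr hx'))
      · rcases ih hx' hy' with h | h
        · exact Or.inl (h.cons _)
        · exact Or.inr (h.cons _)

private lemma ept_noboth {p : List V} {x y : V} (hnd : p.Nodup)
    (h1 : [x, y].Sublist p) (h2 : [y, x].Sublist p) : False := by
  induction p with
  | nil => cases h1
  | cons c t ih =>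
    have hct : c ∉ t := (List.nodup_cons.mp hnd).1
    have hnd' : t.Nodup := (List.nodup_cons.mp hnd).2
    cases h1 with
    | cons _ h1' =>
      cases h2 with
      | cons _ h2' => exact ih hnd' h1' h2'
      | cons_cons _ h2' =>
        exact hct (h1'.subset (by simp))
    | cons_cons _ h1' =>
      cases h2 with
      | cons _ h2' => exact hct (h2'.subset (by simp))
      | cons_cons _ h2' => exact hct (List.singleton_sublist.mp h1')

private lemma ept_chain3 {p : List V} {a b c : V} (hnd : p.Nodup)
    (h1 : [a, b].Sublist p) (h2 : [b, c].Sublist p) : [a, c].Sublist p := by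
  induction p with
  | nil => cases h1
  | cons d t ih =>
    have hdt : d ∉ t := (List.nodup_cons.mp hnd).1
    have hnd' : t.Nodup := (List.nodup_cons.mp hnd).2
    cases h1 with
    | cons _ h1' =>
      cases h2 with
      | cons _ h2' => exact (ih hnd' h1' h2').cons _
      | cons_cons _ h2' => exact absurd (h1'.subset (by simp)) hdt
    | cons_cons _ h1' =>
      cases h2 with
      | cons _ h2' =>
        exact List.Sublist.cons₂ _ (List.singleton_sublist.mpr (h2'.subset (by simp)))
      | cons_cons _ h2' => exact absurd (List.singleton_sublist.mp h1') hdt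

private lemma ept_sub_pair_decomp {p : List V} {x y : V} (h : [x, y].Sublist p) :
    ∃ l1 l2, p = l1 ++ x :: l2 ∧ y ∈ l2 := by
  induction p with
  | nil => cases h
  | cons c t ih =>
    cases h with
    | cons _ h' =>
      obtain ⟨l1, l2, heq, hy⟩ := ih h'
      exact ⟨c :: l1, l2, by rw [heq]; rfl, hy⟩
    | cons_cons _ h' =>
      exact ⟨[], t, rfl, List.singleton_sublist.mp h'⟩

private lemma ept_prefix_split {a b x y : V} {q : List V} (hq : IsSPath E a b q)
    (h : [x, y].Sublist q) : ∃ pre, IsSPath E a x pre ∧ y ∉ pre := by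
  obtain ⟨hc, hn, hh, hl⟩ := hq
  obtain ⟨l1, l2, rfl, hy⟩ := ept_sub_pair_decomp h
  have heq : l1 ++ x :: l2 = (l1 ++ [x]) ++ l2 := by simp
  refine ⟨l1 ++ [x], ⟨?_, ?_, ?_, List.getLast?_concat⟩, ?_⟩
  · rw [heq] at hc; exact (List.isChain_append.mp hc).1
  · rw [heq] at hn; exact (List.sublist_append_left _ _).nodup hn
  · rw [heq, ept_head?_append_left (by simp)] at hh; exact hh
  · intro hmem
    rw [heq] at hn
    rcases List.nodup_append'.mp hn with ⟨-, -, hdisj⟩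
    exact hdisj hmem hy

private lemma ept_suffix_split {a b x y : V} {q : List V} (hq : IsSPath E a b q)
    (h : [x, y].Sublist q) : ∃ suf, IsSPath E y b suf ∧ x ∉ suf := by
  obtain ⟨hc, hn, hh, hl⟩ := hq
  obtain ⟨l1, l2, rfl, hy⟩ := ept_sub_pair_decomp h
  obtain ⟨l2a, l2b, rfl⟩ := List.append_of_mem hy
  have hsfx : (y :: l2b) <:+ l1 ++ x :: (l2a ++ y :: l2b) := ⟨l1 ++ x :: l2a, by simp⟩
  refine ⟨y :: l2b, ⟨hc.suffix hsfx, hsfx.sublist.nodup hn, by simp, ?_⟩, ?_⟩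
  · have heq2 : l1 ++ x :: (l2a ++ y :: l2b) = (l1 ++ x :: l2a) ++ y :: l2b := by simp
    rw [heq2, ept_getLast?_append_cons] at hl
    exact hl
  · intro hmem
    have heq2 : l1 ++ x :: (l2a ++ y :: l2b) = (l1 ++ [x]) ++ (l2a ++ y :: l2b) := by simp
    rw [heq2] at hn
    rcases List.nodup_append'.mp hn with ⟨-, -, hdisj⟩
    exact hdisj (by simp) (List.mem_append.mpr (Or.inr hmem))

private lemma ept_splice {z m : V} (hz : SuperSimple E ι o z) {p1 p2 : List V}
    (h1 : IsSPath E ι m p1) (h2 : IsSPath E m o p2)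
    (hz1 : z ∉ p1) (hz2 : z ∉ p2) : False := by
  obtain ⟨c2, n2, hh2, hl2⟩ := h2
  cases p2 with
  | nil => simp at hh2
  | cons m' t =>
    have hm : m = m' := by symm; simpa using hh2
    subst hm
    cases t with
    | nil =>
      have hmo : m = o := by simpa using hl2
      subst hmo
      exact hz1 (hz p1 h1)
    | cons m2 t2 =>
      obtain ⟨c1, n1, hh1, hl1⟩ := h1
      have hp1ne : p1 ≠ [] := by rintro rfl; simp at hh1
      have hcw : (p1 ++ m2 :: t2).Chain' E := by
        refine List.isChain_append.mpr ?_
        refine ⟨c1, (List.isChain_cons_cons.mp c2).2, ?_⟩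
        intro x hx y hy
        rw [hl1] at hx
        simp at hx hy
        subst hx; subst hy
        exact (List.isChain_cons_cons.mp c2).1
      have hhw : (p1 ++ m2 :: t2).head? = some ι := by
        rw [ept_head?_append_left hp1ne]; exact hh1
      have hlw : (p1 ++ m2 :: t2).getLast? = some o := by
        rw [ept_getLast?_append_cons]
        rw [List.getLast?_cons_cons] at hl2
        exact hl2
      obtain ⟨q, hq, hsub⟩ :=
        ept_extract (p1 ++ m2 :: t2).length (p1 ++ m2 :: t2) ι o le_rfl hcw hhw hlw
      have hzq : z ∈ q := hz q hq
      rcases List.mem_append.mp (hsub z hzq) with h | h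
      · exact hz1 h
      · exact hz2 (List.mem_cons_of_mem _ h)

private lemma ept_antisym {z m : V} (hz : SuperSimple E ι o z)
    (h1 : OccBefore E ι o z m) (h2 : OccBefore E ι o m z) : False := by
  obtain ⟨r, hr, hr'⟩ := h1
  obtain ⟨s, hs, hs'⟩ := h2
  obtain ⟨suf, hsuf, hzsuf⟩ := ept_suffix_split hr hr'
  obtain ⟨pre, hpre, hzpre⟩ := ept_prefix_split hs hs'
  exact ept_splice hz hpre hsuf hzpre hzsuf

private lemma ept_main1 {z m : V} (hz : SuperSimple E ι o z)
    (hocc : OccBefore E ι o z m) {p : List V} (hp : IsSPath E ι m p)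
    (hzp : z ∉ p) : False := by
  obtain ⟨r, hr, hsub⟩ := hocc
  obtain ⟨suf, hsuf, hzsuf⟩ := ept_suffix_split hr hsub
  exact ept_splice hz hp hsuf hzp hzsuf

private lemma ept_trans_occ {z z' m : V} (hz : SuperSimple E ι o z)
    (hz' : SuperSimple E ι o z') (h1 : OccBefore E ι o z z')
    (h2 : OccBefore E ι o z' m) : OccBefore E ι o z m := by
  obtain ⟨s, hs, hsub⟩ := h2
  have hz'mem : z' ∈ s := hsub.subset (by simp)
  have hzmem : z ∈ s := hz s hs
  have hne : z ≠ z' := by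
    obtain ⟨r, hr, hrsub⟩ := h1
    have hnd := hrsub.nodup hr.2.1
    simp at hnd
    exact hnd
  rcases ept_order_mem hzmem hz'mem hne with hgood | hbad
  · exact ⟨s, hs, ept_chain3 hs.2.1 hgood hsub⟩
  · exact absurd h1 (fun h => ept_antisym hz h ⟨s, hs, hbad⟩)

private lemma ept_lastp (S : V → Prop) : ∀ (p : List V), (∃ x ∈ p, S x) →
    ∃ l1 x l2, p = l1 ++ x :: l2 ∧ S x ∧ ∀ y ∈ l2, ¬ S y := by
  intro p
  induction p with
  | nil => rintro ⟨x, hx, -⟩; simp at hx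
  | cons a t ih =>
    intro h
    by_cases ht : ∃ x ∈ t, S x
    · obtain ⟨l1, x, l2, heq, hx, hl2⟩ := ih ht
      exact ⟨a :: l1, x, l2, by rw [heq]; rfl, hx, hl2⟩
    · obtain ⟨x, hx, hSx⟩ := h
      rcases List.mem_cons.mp hx with rfl | hx'
      · exact ⟨[], x, t, rfl, hSx, fun y hy hSy => ht ⟨y, hy, hSy⟩⟩
      · exact absurd ⟨x, hx', hSx⟩ ht

private lemma ept_isSPath_split {a b x : V} {l1 l2 : List V}
    (h : IsSPath E a b (l1 ++ x :: l2)) :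
    IsSPath E a x (l1 ++ [x]) ∧ IsSPath E x b (x :: l2) := by
  obtain ⟨hc, hn, hh, hl⟩ := h
  have heq : l1 ++ x :: l2 = (l1 ++ [x]) ++ l2 := by simp
  have hsfx : (x :: l2) <:+ l1 ++ x :: l2 := ⟨l1, rfl⟩
  constructor
  · refine ⟨?_, ?_, ?_, List.getLast?_concat⟩
    · rw [heq] at hc; exact (List.isChain_append.mp hc).1
    · rw [heq] at hn; exact (List.sublist_append_left _ _).nodup hn
    · rw [heq, ept_head?_append_left (by simp)] at hh; exact hh
  · refine ⟨hc.suffix hsfx, hsfx.sublist.nodup hn, by simp, ?_⟩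
    rw [ept_getLast?_append_cons] at hl
    exact hl

end EPTHelpers

/-- If `ρ` is super-simple and `ρ ⪯ σᵘ(κ)`, then every simple path from `ι`
to `κ` passes through `ρ`. -/
theorem every_path_through {V : Type*} (E : V → V → Prop) (ι o : V)
    (hcore : Core E ι o) (ρ κ σu : V)
    (hρ : SuperSimple E ι o ρ) (hu : IsSigmaU E ι o κ σu)
    (hle : SLe E ι o ρ σu) :
    ∀ p, IsSPath E ι κ p → ρ ∈ p := by
  intro p hp
  by_contra hρp
  obtain ⟨w, hwc, hwh, hwl⟩ := ept_walk_of_rtg (hcore ι).2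
  obtain ⟨q0, hq0, -⟩ := ept_extract w.length w ι o le_rfl hwc hwh hwl
  -- Step 1: reduce `hle` to `ρ = σu ∨ OccBefore ρ σu`
  have H : ρ = σu ∨ OccBefore E ι o ρ σu := by
    rcases hle with hlt | ⟨heq, -⟩ | hsame
    · obtain ⟨hne, ρ', hρ', h1, h2⟩ := hlt
      rcases h1 with rfl | h1
      · rcases h2 with h2 | h2
        · exact absurd h2.symm hne
        · exact Or.inr h2
      · rcases h2 with rfl | h2
        · exact Or.inr h1
        · exact Or.inr (ept_trans_occ hρ hρ' h1 h2)
    · exact Or.inl heq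
    · obtain ⟨ρ₀, ρ₁, hadj, hρm, -⟩ := hsame
      simp only [SimpleSubnet, Set.mem_setOf_eq] at hρm
      exact absurd ⟨ρ, hρ, hρm.2.1, hρm.2.2⟩ hadj.2.2.2
  rcases hu with ⟨hκs, rfl⟩ | ⟨hκapp, hσs, -, hmin⟩
  · -- κ is simple and σu = κ
    rcases H with rfl | hocc
    · exact hρp (List.mem_of_mem_getLast? (by rw [hp.2.2.2]; rfl))
    · exact ept_main1 hρ hocc hp hρp
  · -- κ is appendage
    have hιmem : ι ∈ p := List.mem_of_mem_head? (by rw [hp.2.2.1]; rfl)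
    have hιq0 : ι ∈ q0 := List.mem_of_mem_head? (by rw [hq0.2.2.1]; rfl)
    have hιs : SimpleNode E ι o ι := ⟨q0, hq0, hιq0⟩
    obtain ⟨l1, σ', l2, rfl, hσ's, hl2⟩ :=
      ept_lastp (SimpleNode E ι o) p ⟨ι, hιmem, hιs⟩
    obtain ⟨hpre, hsuf⟩ := ept_isSPath_split hp
    have hρpre : ρ ∉ l1 ++ [σ'] := by
      intro h
      apply hρp
      simp only [List.mem_append, List.mem_cons, List.mem_singleton] at h ⊢
      tauto
    obtain ⟨q, hq, hσ'q⟩ := hσ's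
    have hρq : ρ ∈ q := hρ q hq
    by_cases hρσ' : ρ = σ'
    · exact hρp (by rw [hρσ']; simp)
    · rcases ept_order_mem hρq hσ'q hρσ' with hzs | hsz
      · exact ept_main1 hρ ⟨q, hq, hzs⟩ hpre hρpre
      · have hocc' : OccBefore E ι o σ' ρ := ⟨q, hq, hsz⟩
        have hneσ : σ' ≠ σu := by
          rintro rfl
          rcases H with rfl | hocc
          · exact hρσ' rfl
          · exact ept_antisym hρ hocc hocc'
        have hslt : SLt E ι o σ' σu :=
          ⟨hneσ, ρ, hρ, Or.inr hocc', H.imp Eq.symm id⟩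
        have hκmem : κ ∈ σ' :: l2 :=
          List.mem_of_mem_getLast? (by rw [hsuf.2.2.2]; rfl)
        have happ : AppPath E ι o σ' κ (σ' :: l2) := by
          refine ⟨hsuf, ⟨κ, hκmem, hκapp⟩, ?_⟩
          intro x hx hxσ' _
          have hxl2 : x ∈ l2 := by
            rcases List.mem_cons.mp hx with rfl | h
            · exact absurd rfl hxσ'
            · exact h
          exact hl2 x hxl2
        exact hmin σ' ⟨q, hq, hσ'q⟩ ⟨σ' :: l2, happ⟩ hslt
end

section
/- In a core input-output network G, if κ is a node with σᵘ(κ) ≺ ρ for a super-simple node ρ, then there exists a simple path from ι to κ avoiding ρ; hence ρ is not a super-simple node of G(κ). -/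
section
variable {V : Type*} {E : V → V → Prop}

private lemma head?_append_cons' (s t : List V) (a : V) :
    (s ++ a :: t).head? = (s ++ [a]).head? := by cases s <;> simp

/-- Any chain (walk) can be deduplicated to a nodup chain with the same endpoints. -/
private lemma dedup_walk : ∀ (p : List V), p.Chain' E →
    ∃ q : List V, q.Chain' E ∧ q.Nodup ∧ q.head? = p.head? ∧
      q.getLast? = p.getLast? ∧ ∀ x ∈ q, x ∈ p := by
  intro p
  induction p with
  | nil => intro _; exact ⟨[], List.isChain_nil, by simp, rfl, rfl, by simp⟩
  | cons x rest ih =>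
    intro hc
    obtain ⟨hhead, hcr⟩ := List.isChain_cons.1 hc
    obtain ⟨q', hq'c, hq'n, hq'h, hq'l, hq'sub⟩ := ih hcr
    by_cases hx : x ∈ q'
    · obtain ⟨m₁, m₂, rfl⟩ := List.append_of_mem hx
      refine ⟨x :: m₂, ?_, ?_, by simp, ?_, ?_⟩
      · exact hq'c.suffix ⟨m₁, rfl⟩
      · exact hq'n.sublist (List.sublist_append_right m₁ (x :: m₂))
      · have h1 : (m₁ ++ x :: m₂).getLast? = (x :: m₂).getLast? :=
          List.getLast?_append_cons m₁ x m₂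
        have hrne : rest ≠ [] := by
          intro h; subst h
          simpa using hq'sub x hx
        cases rest with
        | nil => exact absurd rfl hrne
        | cons r rs =>
          rw [List.getLast?_cons_cons]
          rw [← hq'l, ← h1]
      · intro y hy
        have : y ∈ m₁ ++ x :: m₂ := by
          rcases List.mem_cons.1 hy with rfl | h
          · exact hx
          · simp [h]
        exact List.mem_cons_of_mem x (hq'sub y this)
    · refine ⟨x :: q', ?_, ?_, by simp, ?_, ?_⟩
      · exact List.isChain_cons.2 ⟨by rw [hq'h] at *; exact hhead, hq'c⟩
      · exact List.nodup_cons.2 ⟨hx, hq'n⟩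
      · cases rest with
        | nil =>
          have : q' = [] := by
            rw [← List.head?_eq_none_iff, hq'h]; rfl
          subst this; rfl
        | cons r rs =>
          have hq'ne : q' ≠ [] := by
            intro h; subst h; simp at hq'h
          rw [List.getLast?_cons_cons]
          cases q' with
          | nil => exact absurd rfl hq'ne
          | cons a as => rw [List.getLast?_cons_cons, hq'l]
      · intro y hy
        rcases List.mem_cons.1 hy with rfl | h
        · exact List.mem_cons_self
        · exact List.mem_cons_of_mem x (hq'sub y h)

private lemma spath_of_walk {a b : V} {p : List V} (hc : p.Chain' E)
    (ha : p.head? = some a) (hb : p.getLast? = some b) :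
    ∃ q, IsSPath E a b q ∧ ∀ x ∈ q, x ∈ p := by
  obtain ⟨q, h1, h2, h3, h4, h5⟩ := dedup_walk p hc
  exact ⟨q, ⟨h1, h2, h3.trans ha, h4.trans hb⟩, h5⟩

private lemma occ_split {ι o a b : V} (h : OccBefore E ι o a b) :
    ∃ p s t, IoSPath E ι o p ∧ p = s ++ a :: t ∧ b ∈ t := by
  obtain ⟨p, hp, hsub⟩ := h
  obtain ⟨r₁, r₂, rfl, ha, hb⟩ := List.cons_sublist_iff.1 hsub
  obtain ⟨s, t', rfl⟩ := List.append_of_mem ha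
  refine ⟨_, s, t' ++ r₂, hp, by simp, ?_⟩
  have hbmem : b ∈ r₂ := (List.singleton_sublist).1 hb
  simp [hbmem]

private lemma prefix_spath {ι o ρ a : V} {p s t : List V} (hp : IoSPath E ι o p)
    (hps : p = s ++ a :: t) (hρ : ρ ∈ t) :
    IsSPath E ι a (s ++ [a]) ∧ ρ ∉ s ++ [a] := by
  obtain ⟨hc, hn, hh, _⟩ := hp
  subst hps
  constructor
  · refine ⟨hc.prefix ⟨t, by simp⟩, ?_, ?_, List.getLast?_concat⟩
    · exact hn.sublist (by simpa using (List.sublist_append_left (s ++ [a]) t))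
    · rw [← hh]; exact (head?_append_cons' s t a).symm
  · intro hmem
    rcases List.mem_append.1 hmem with h | h
    · have := (List.nodup_append.1 hn).2.2
      exact this _ h _ (List.mem_cons_of_mem a hρ) rfl
    · have : ρ = a := by simpa using h
      subst this
      have := (List.nodup_append.1 hn).2.1
      exact (List.nodup_cons.1 this).1 hρ

/-- Key claim: σu occurs strictly before ρ on some ιo-simple path. -/
private lemma key {ι o ρ σu : V} (hρ : SuperSimple E ι o ρ)
    (hlt : SLt E ι o σu ρ) :
    ∃ p s t, IoSPath E ι o p ∧ p = s ++ σu :: t ∧ ρ ∈ t := by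
  obtain ⟨hne, ρ₀, hρ₀, h1, h2⟩ := hlt
  rcases h1 with rfl | h1
  · rcases h2 with rfl | h2
    · exact absurd rfl hne
    · exact occ_split h2
  · rcases h2 with rfl | h2
    · exact occ_split h1
    · -- hard case
      obtain ⟨p₁, u₁, u₂, hp₁, hp₁e, hρ₀u₂⟩ := occ_split h1
      obtain ⟨p₂, a₁, a₂, hp₂, hp₂e, hρa₂⟩ := occ_split h2
      have hρp₁ : ρ ∈ p₁ := hρ p₁ hp₁
      rw [hp₁e] at hρp₁
      rcases List.mem_append.1 hρp₁ with hρu₁ | hρcons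
      · -- ρ ∈ u₁ : build a walk avoiding ρ, contradiction
        exfalso
        obtain ⟨v₁, v₂, rfl⟩ := List.append_of_mem hρ₀u₂
        -- p₁ = u₁ ++ σu :: v₁ ++ ρ₀ :: v₂ ; p₂ = a₁ ++ ρ₀ :: a₂
        obtain ⟨hc₁, hn₁, hh₁, hl₁⟩ := hp₁
        obtain ⟨hc₂, hn₂, hh₂, hl₂⟩ := hp₂
        rw [hp₁e] at hc₁ hn₁ hh₁ hl₁
        rw [hp₂e] at hc₂ hn₂ hh₂ hl₂
        -- chain of the suffix ρ₀ :: v₂ of p₁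
        have hsuf : (ρ₀ :: v₂).Chain' E := by
          refine hc₁.suffix ⟨u₁ ++ σu :: v₁, by simp⟩
        have hApre : (a₁ ++ [ρ₀]).Chain' E := hc₂.prefix ⟨a₂, by simp⟩
        set w := (a₁ ++ [ρ₀]) ++ v₂ with hw
        have hwc : w.Chain' E := by
          refine List.isChain_append.2 ⟨hApre, hsuf.tail, ?_⟩
          intro x hx y hy
          rw [List.getLast?_concat] at hx
          obtain rfl : ρ₀ = x := by simpa using hx
          exact (List.isChain_cons.1 hsuf).1 y hy
        have hwne : w = a₁ ++ ρ₀ :: v₂ := by simp [hw]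
        have hwh : w.head? = some ι := by
          rw [hwne, head?_append_cons' a₁ v₂ ρ₀, ← head?_append_cons' a₁ a₂ ρ₀, hh₂]
        have hwl : w.getLast? = some o := by
          rw [hwne, List.getLast?_append_cons]
          have heq : u₁ ++ σu :: (v₁ ++ ρ₀ :: v₂) = (u₁ ++ σu :: v₁) ++ ρ₀ :: v₂ := by
            simp
          rw [heq, List.getLast?_append_cons] at hl₁
          exact hl₁
        obtain ⟨q, hq, hqsub⟩ := spath_of_walk hwc hwh hwl
        have hρq : ρ ∈ q := hρ q hq
        have hρw : ρ ∈ w := hqsub ρ hρq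
        rw [hwne] at hρw
        -- but ρ ∉ a₁ ++ ρ₀ :: v₂
        have hρ_ne_ρ₀ : ρ ≠ ρ₀ := by
          rintro rfl
          have := (List.nodup_append.1 hn₂).2.1
          exact (List.nodup_cons.1 this).1 hρa₂
        have hρ_not_a₁ : ρ ∉ a₁ := by
          intro h
          exact (List.nodup_append.1 hn₂).2.2 _ h _ (List.mem_cons_of_mem _ hρa₂) rfl
        have hρ_not_v₂ : ρ ∉ v₂ := by
          intro h
          refine (List.nodup_append.1 hn₁).2.2 _ hρu₁ _ ?_ rfl
          simp [h]
        rcases List.mem_append.1 hρw with h | h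
        · exact hρ_not_a₁ h
        · rcases List.mem_cons.1 h with rfl | h
          · exact hρ_ne_ρ₀ rfl
          · exact hρ_not_v₂ h
      · rcases List.mem_cons.1 hρcons with rfl | hρu₂
        · exact absurd rfl hne
        · exact ⟨p₁, u₁, u₂, hp₁, hp₁e, hρu₂⟩

end

/-- If `σᵘ(κ) ≺ ρ` for a super-simple node `ρ` of `G`, then some simple path
from `ι` to `κ` avoids `ρ`; hence `ρ` is not super-simple in `G(κ)`. -/
theorem avoid_superSimple {V : Type*} (E : V → V → Prop) (ι o : V)
    (hcore : Core E ι o) (ρ κ σu : V)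
    (hρ : SuperSimple E ι o ρ) (hu : IsSigmaU E ι o κ σu)
    (hlt : SLt E ι o σu ρ) :
    (∃ p, IsSPath E ι κ p ∧ ρ ∉ p) ∧ ¬ SuperSimple E ι κ ρ := by
  obtain ⟨p, s, t, hp, hps, hρt⟩ := key hρ hlt
  obtain ⟨hpre, hρpre⟩ := prefix_spath hp hps hρt
  have hρsimple : SimpleNode E ι o ρ := ⟨p, hp, by rw [hps]; simp [hρt]⟩
  have main : ∃ q, IsSPath E ι κ q ∧ ρ ∉ q := by
    rcases hu with ⟨hκs, rfl⟩ | ⟨hκa, hσs, ⟨qa, hqaS, _, hqaApp⟩, _⟩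
    · exact ⟨s ++ [σu], hpre, hρpre⟩
    · obtain ⟨hqc, hqn, hqh, hql⟩ := hqaS
      cases qa with
      | nil => simp at hqh
      | cons y qt =>
        obtain rfl : σu = y := by have := hqh; simp at this; exact this.symm
        -- walk w = (s ++ [σu]) ++ qt
        set w := (s ++ [σu]) ++ qt with hw
        have hwc : w.Chain' E := by
          refine List.isChain_append.2 ⟨hpre.1, hqc.tail, ?_⟩
          intro x hx z hz
          rw [List.getLast?_concat] at hx
          obtain rfl : σu = x := by simpa using hx
          exact (List.isChain_cons.1 hqc).1 z hz
        have hwne : w = s ++ σu :: qt := by simp [hw]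
        have hwh : w.head? = some ι := by
          rw [hwne, head?_append_cons' s qt σu]
          exact hpre.2.2.1
        have hwl : w.getLast? = some κ := by
          rw [hwne, List.getLast?_append_cons]
          exact hql
        obtain ⟨q, hq, hqsub⟩ := spath_of_walk hwc hwh hwl
        refine ⟨q, hq, fun hρq => ?_⟩
        have hρw : ρ ∈ w := hqsub ρ hρq
        rw [hwne] at hρw
        rcases List.mem_append.1 hρw with h | h
        · exact hρpre (by simp [h])
        · rcases List.mem_cons.1 h with rfl | h
          · exact hlt.1 rfl
          · have hρqa : ρ ∈ σu :: qt := List.mem_cons_of_mem _ h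
            by_cases hk : ρ = κ
            · exact hκa (hk ▸ hρsimple)
            · exact hqaApp ρ hρqa (fun hh => hlt.1 hh.symm) hk hρsimple
  obtain ⟨q, hq, hρq⟩ := main
  exact ⟨⟨q, hq, hρq⟩, fun h => hρq (h q hq)⟩
end
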